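/- arXiv:2401.07365 — 7 statements merged into one kernel-verified Lean document; each statement's English description precedes it below -/
import Mathlib

section
/- Using the binomial betting strategy with parameter p ∈ [0,1], i.e., B_t(0) = (1−p)(t+1)/(t−L_{t−1}) and B_t(1) = p(t+1)/(L_{t−1}+1), the wealth after T steps with exactly ℓ losses equals W_T^p(ℓ) = (T+1)·p^ℓ·(1−p)^{T−ℓ}·C(T,ℓ), regardless of the order in which the ℓ losses occur. -/
open Finset

/-- Closed-form wealth of the binomial strategy: with bets
`B_t(1) = p(t+1)/(L_{t-1}+1)` and `B_t(0) = (1−p)(t+1)/(t−L_{t-1})`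
(written 0-indexed below), the wealth after `T` steps along any binary
sequence `i` with `ℓ = L_T` losses equals `(T+1)·p^ℓ·(1−p)^{T−ℓ}·C(T,ℓ)`,
regardless of the order of the losses. -/
theorem stmt2 (T : ℕ) (i : ℕ → Bool) (p : ℝ) (hp0 : 0 ≤ p) (hp1 : p ≤ 1)
    (L : ℕ → ℕ) (hL : ∀ t, L t = ((Finset.range t).filter (fun s => i s = true)).card)
    (B : ℕ → ℝ)
    (hB : ∀ t, B t = if i t then p * ((t : ℝ) + 2) / ((L t : ℝ) + 1)
      else (1 - p) * ((t : ℝ) + 2) / ((t : ℝ) + 1 - L t)) :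
    (∏ t ∈ Finset.range T, B t)
      = ((T : ℝ) + 1) * p ^ (L T) * (1 - p) ^ (T - L T) * (Nat.choose T (L T) : ℝ) := by
  induction T with
  | zero =>
      simp [hL 0]
  | succ T ih =>
      have hLle : L T ≤ T := by
        rw [hL T]
        calc ((Finset.range T).filter (fun s => i s = true)).card
            ≤ (Finset.range T).card := Finset.card_filter_le _ _
          _ = T := Finset.card_range T
      have hsucc : L (T + 1) = if i T then L T + 1 else L T := by
        rw [hL (T+1), hL T, Finset.range_add_one, Finset.filter_insert]
        split
        · rw [Finset.card_insert_of_notMem (by simp)]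
        · rfl
      rw [Finset.prod_range_succ, ih, hB T]
      by_cases hiT : i T
      · simp only [hiT, if_true] at hsucc ⊢
        rw [hsucc]
        have hch : ((T : ℝ) + 1) * (T.choose (L T) : ℝ)
            = ((T+1).choose (L T + 1) : ℝ) * ((L T : ℝ) + 1) := by
          exact_mod_cast Nat.add_one_mul_choose_eq T (L T)
        have hne : ((L T : ℝ) + 1) ≠ 0 := by positivity
        have hsub : T + 1 - (L T + 1) = T - L T := by omega
        rw [hsub]
        push_cast
        field_simp
        linear_combination (p ^ (L T) * p * (1 - p) ^ (T - L T) * ((T:ℝ) + 2)) * hch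
      · have hiT' : i T = false := by simpa using hiT
        simp only [hiT', Bool.false_eq_true, if_false] at hsucc ⊢
        rw [hsucc]
        have hne : ((T : ℝ) + 1 - (L T : ℝ)) ≠ 0 := by
          have : (L T : ℝ) ≤ T := by exact_mod_cast hLle
          linarith
        have hch : ((T+1).choose (L T) : ℝ) * ((T : ℝ) + 1 - (L T : ℝ))
            = ((T : ℝ) + 1) * (T.choose (L T) : ℝ) := by
          have h2 : (T.choose (L T) * (T + 1) : ℕ) = ((T+1).choose (L T) * (T + 1 - L T) : ℕ) :=
            Nat.choose_mul_succ_eq T (L T)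
          have h3 : (T.choose (L T) : ℝ) * ((T : ℝ) + 1)
              = ((T+1).choose (L T) : ℝ) * ((T : ℝ) + 1 - L T) := by
            have := congrArg (fun n : ℕ => (n : ℝ)) h2
            push_cast [Nat.cast_sub (by omega : L T ≤ T + 1)] at this
            linarith
          linarith
        have hsub : T + 1 - L T = (T - L T) + 1 := by omega
        rw [hsub]
        push_cast
        field_simp
        linear_combination (-(p ^ (L T) * (1 - p) ^ (T - L T) * (1 - p) * ((T:ℝ) + 2))) * hch
end

section
/- For every T ∈ ℕ and every ℓ ∈ {0,...,T}, the oracle binomial wealth satisfies W_T^{ℓ/T}(ℓ) ≥ √(2/(π·e^{1/6}))·√(T+1). -/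
open Real Filter Topology Stirling Nat

private lemma step_bound (k : ℕ) :
    Real.log (stirlingSeq (k + 1)) - Real.log (stirlingSeq (k + 2)) ≤
      1 / (12 * ((k : ℝ) + 1) * ((k : ℝ) + 2)) := by
  have hq0 : (0:ℝ) < 2 * (↑(k+1) : ℝ) + 1 := by positivity
  set q : ℝ := ((1:ℝ) / (2 * (↑(k+1) : ℝ) + 1)) ^ 2 with hqdef
  have hq_pos : 0 < q := by positivity
  have hq_lt : q < 1 := by
    rw [hqdef, div_pow, one_pow, div_lt_one (by positivity)]
    push_cast
    nlinarith [Nat.cast_nonneg (α := ℝ) k]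
  have hgeo : HasSum (fun j : ℕ => (1/3 : ℝ) * q ^ (j + 1)) ((1/3) * (q * (1 - q)⁻¹)) := by
    have := (hasSum_geometric_of_lt_one hq_pos.le hq_lt).mul_left q
    simp_rw [← _root_.pow_succ'] at this
    exact this.mul_left (1/3)
  have hab : ∀ j : ℕ, (1 : ℝ) / (2 * (↑(j + 1) : ℝ) + 1) * q ^ (j + 1) ≤ (1/3 : ℝ) * q ^ (j + 1) := by
    intro j
    have h1 : (1 : ℝ) / (2 * (↑(j + 1) : ℝ) + 1) ≤ 1/3 := by
      rw [div_le_div_iff₀ (by positivity) (by norm_num)]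
      push_cast; linarith [Nat.cast_nonneg (α := ℝ) j]
    exact mul_le_mul_of_nonneg_right h1 (by positivity)
  have hsum := hasSum_le hab (log_stirlingSeq_diff_hasSum k) hgeo
  refine hsum.trans (le_of_eq ?_)
  have h1q : (0:ℝ) < 1 - q := by nlinarith
  rw [hqdef]
  push_cast
  rw [div_pow, one_pow]
  have hc : (0:ℝ) < (2*((k:ℝ)+1)+1)^2 := by positivity
  have hc1 : (0:ℝ) < (2*((k:ℝ)+1)+1)^2 - 1 := by nlinarith [Nat.cast_nonneg (α := ℝ) k]
  rw [one_sub_div hc.ne', inv_div]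
  field_simp
  ring

private lemma tele_bound (n : ℕ) (k : ℕ) :
    Real.log (stirlingSeq (n + 1)) - Real.log (stirlingSeq (n + 1 + k)) ≤
      1/12 * (1/((n:ℝ)+1) - 1/((n:ℝ)+1+k)) := by
  induction k with
  | zero => simp
  | succ k ih =>
      have h := step_bound (n + k)
      have harr : n + 1 + (k + 1) = (n + k) + 2 := by omega
      have harr2 : n + 1 + k = (n + k) + 1 := by omega
      rw [harr]
      rw [harr2] at ih
      push_cast at h ih ⊢
      have hcomb : (1:ℝ)/(12 * ((n:ℝ)+k+1) * ((n:ℝ)+k+2))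
          = 1/12 * (1/((n:ℝ)+1+k) - 1/((n:ℝ)+1+(k+1))) := by
        have h1 : ((n:ℝ)+1+k) ≠ 0 := by positivity
        have h2 : ((n:ℝ)+1+(k+1)) ≠ 0 := by positivity
        field_simp
        ring
      have := add_le_add ih h
      rw [hcomb] at h
      linarith [h, ih]

private lemma stirling_le (n : ℕ) :
    stirlingSeq (n + 1) ≤ Real.sqrt π * Real.exp (1 / (12 * ((n:ℝ) + 1))) := by
  have hpos := stirlingSeq'_pos n
  have hsp : (0:ℝ) < Real.sqrt π := Real.sqrt_pos.2 pi_pos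
  have hnat : Tendsto (fun k : ℕ => n + 1 + k) atTop atTop :=
    tendsto_atTop_mono (fun k => Nat.le_add_left k (n+1)) tendsto_id
  have hlim : Tendsto (fun k : ℕ => Real.log (stirlingSeq (n + 1 + k))) atTop
      (𝓝 (Real.log (Real.sqrt π))) :=
    ((Real.continuousAt_log hsp.ne').tendsto.comp (tendsto_stirlingSeq_sqrt_pi.comp hnat))
  have hle : Real.log (stirlingSeq (n+1)) - Real.log (Real.sqrt π) ≤ 1/(12*((n:ℝ)+1)) := by
    refine le_of_tendsto' (tendsto_const_nhds.sub hlim) ?_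
    intro k
    refine (tele_bound n k).trans ?_
    have : (0:ℝ) ≤ 1/((n:ℝ)+1+k) := by positivity
    rw [one_div (12*((n:ℝ)+1))]
    rw [mul_sub]
    have h12 : (1:ℝ)/12 * (1/((n:ℝ)+1)) = (12*((n:ℝ)+1))⁻¹ := by
      field_simp
    linarith [mul_pos (show (0:ℝ) < 1/12 by norm_num) (show (0:ℝ) < 1/((n:ℝ)+1+k) by positivity), h12]
  calc stirlingSeq (n+1) = Real.exp (Real.log (stirlingSeq (n+1))) := (Real.exp_log hpos).symm
    _ ≤ Real.exp (Real.log (Real.sqrt π) + 1/(12*((n:ℝ)+1))) := by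
        apply Real.exp_le_exp.2; linarith
    _ = Real.sqrt π * Real.exp (1/(12*((n:ℝ)+1))) := by
        rw [Real.exp_add, Real.exp_log hsp]

private lemma stirling_ge (n : ℕ) : Real.sqrt π ≤ stirlingSeq (n + 1) := by
  have ha : Antitone (stirlingSeq ∘ Nat.succ) := stirlingSeq'_antitone
  have ht : Tendsto (stirlingSeq ∘ Nat.succ) atTop (𝓝 (Real.sqrt π)) := by
    apply tendsto_stirlingSeq_sqrt_pi.comp
    exact tendsto_atTop_mono (fun k => Nat.le_succ k) tendsto_id
  exact ha.le_of_tendsto ht n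

private lemma fact_ge (n : ℕ) (hn : 1 ≤ n) :
    Real.sqrt π * (Real.sqrt (2*(n:ℝ)) * ((n:ℝ)/Real.exp 1)^n) ≤ (n ! : ℝ) := by
  obtain ⟨m, rfl⟩ := Nat.exists_eq_add_of_le hn
  have hD : (0:ℝ) < Real.sqrt (2*((1+m:ℕ):ℝ)) * (((1+m:ℕ):ℝ)/Real.exp 1)^(1+m) := by
    have : (0:ℝ) < ((1+m:ℕ):ℝ) := by positivity
    positivity
  have h := stirling_ge m
  rw [show m + 1 = 1 + m by omega] at h
  rw [stirlingSeq, le_div_iff₀ hD] at h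
  · exact_mod_cast h

private lemma fact_le (n : ℕ) (hn : 1 ≤ n) :
    (n ! : ℝ) ≤ Real.sqrt π * Real.exp (1/(12*(n:ℝ))) *
      (Real.sqrt (2*(n:ℝ)) * ((n:ℝ)/Real.exp 1)^n) := by
  obtain ⟨m, rfl⟩ := Nat.exists_eq_add_of_le hn
  have hD : (0:ℝ) < Real.sqrt (2*((1+m:ℕ):ℝ)) * (((1+m:ℕ):ℝ)/Real.exp 1)^(1+m) := by
    have : (0:ℝ) < ((1+m:ℕ):ℝ) := by positivity
    positivity
  have h := stirling_le m
  rw [show m + 1 = 1 + m by omega] at h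
  rw [stirlingSeq, div_le_iff₀ hD] at h
  push_cast at h ⊢
  ring_nf at h ⊢
  linarith [h]

private lemma exp16_le : Real.exp (1/6 : ℝ) ≤ 3/2 := by
  by_contra hcon
  push_neg at hcon
  have h6 : Real.exp (1/6:ℝ) ^ 6 = Real.exp 1 := by
    rw [← Real.exp_nat_mul]; norm_num
  have h : (3/2:ℝ)^6 < Real.exp (1/6) ^ 6 :=
    pow_lt_pow_left₀ hcon (by norm_num) (by norm_num)
  rw [h6] at h
  nlinarith [Real.exp_one_lt_d9]

private lemma key_one (M : ℝ) (hM1 : 1 ≤ M) (hq : 6*M ≤ (1+M)*(2+M)) :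
    4*M*(Real.exp (1/6) * Real.exp (1/(6*M))) ≤ (1+M)*(2+M)*Real.exp (1/6) := by
  have he : Real.exp (1/(6*M)) ≤ 3/2 := by
    refine (Real.exp_le_exp.2 ?_).trans exp16_le
    rw [div_le_div_iff₀ (by positivity) (by norm_num)]
    linarith
  have h4 : 4*M*Real.exp (1/(6*M)) ≤ (1+M)*(2+M) := by
    nlinarith [Real.exp_pos (1/(6*M))]
  have hE := Real.exp_pos (1/6:ℝ)
  calc 4*M*(Real.exp (1/6) * Real.exp (1/(6*M)))
      = (4*M*Real.exp (1/(6*M))) * Real.exp (1/6) := by ring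
    _ ≤ ((1+M)*(2+M)) * Real.exp (1/6) := mul_le_mul_of_nonneg_right h4 hE.le
    _ = (1+M)*(2+M)*Real.exp (1/6) := by ring

private lemma key_ineq (l m : ℕ) (hl : 1 ≤ l) (hm : 1 ≤ m) :
    4*(l:ℝ)*(m:ℝ)*(Real.exp (1/(6*(l:ℝ))) * Real.exp (1/(6*(m:ℝ)))) ≤
      ((l:ℝ)+(m:ℝ))*(((l:ℝ)+(m:ℝ))+1)*Real.exp (1/6) := by
  have hL : (1:ℝ) ≤ l := by exact_mod_cast hl
  have hM : (1:ℝ) ≤ m := by exact_mod_cast hm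
  have hquad : ∀ x : ℕ, 1 ≤ x → 6*(x:ℝ) ≤ (1+(x:ℝ))*(2+(x:ℝ)) := by
    intro x hx
    rcases Nat.lt_or_ge x 2 with h | h
    · interval_cases x; norm_num
    · have : (2:ℝ) ≤ x := by exact_mod_cast h
      nlinarith
  rcases Nat.lt_or_ge l 2 with h | hl2
  · have hl1 : l = 1 := by omega
    subst hl1
    have := key_one (m:ℝ) hM (hquad m hm)
    push_cast
    rw [show (1:ℝ)/(6*1) = 1/6 by norm_num]
    nlinarith [this]
  rcases Nat.lt_or_ge m 2 with h | hm2
  · have hm1 : m = 1 := by omega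
    subst hm1
    have := key_one (l:ℝ) hL (hquad l hl)
    push_cast
    rw [show (1:ℝ)/(6*1) = 1/6 by norm_num]
    nlinarith [this]
  · have hL2 : (2:ℝ) ≤ l := by exact_mod_cast hl2
    have hM2 : (2:ℝ) ≤ m := by exact_mod_cast hm2
    have hLM : 4*(l:ℝ)*(m:ℝ) ≤ ((l:ℝ)+(m:ℝ))*(((l:ℝ)+(m:ℝ))+1) := by
      nlinarith [sq_nonneg ((l:ℝ)-(m:ℝ))]
    have hexp : Real.exp (1/(6*(l:ℝ))) * Real.exp (1/(6*(m:ℝ))) ≤ Real.exp (1/6) := by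
      rw [← Real.exp_add]
      apply Real.exp_le_exp.2
      have h1 : (1:ℝ)/(6*(l:ℝ)) ≤ 1/12 := by
        rw [div_le_div_iff₀ (by positivity) (by norm_num)]; nlinarith
      have h2 : (1:ℝ)/(6*(m:ℝ)) ≤ 1/12 := by
        rw [div_le_div_iff₀ (by positivity) (by norm_num)]; nlinarith
      linarith
    exact mul_le_mul hLM hexp (by positivity) (by positivity)

/-- Uniform lower bound on the oracle binomial wealth:
`W_T^{ℓ/T}(ℓ) ≥ √(2/(π·e^{1/6}))·√(T+1)` for every `T` and `ℓ ∈ {0,…,T}`. -/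
theorem stmt4 (T ℓ : ℕ) (hℓ : ℓ ≤ T) :
    ((T : ℝ) + 1) * ((ℓ : ℝ) / T) ^ ℓ * (1 - (ℓ : ℝ) / T) ^ (T - ℓ) * (Nat.choose T ℓ : ℝ)
      ≥ Real.sqrt (2 / (Real.pi * Real.exp (1 / 6))) * Real.sqrt ((T : ℝ) + 1) := by
  have hc1 : Real.sqrt (2 / (Real.pi * Real.exp (1/6))) ≤ 1 := by
    rw [Real.sqrt_le_one]
    rw [div_le_one (by positivity)]
    nlinarith [Real.pi_gt_three, Real.one_le_exp (show (0:ℝ) ≤ 1/6 by norm_num)]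
  have htriv : ∀ S : ℕ, Real.sqrt (2 / (Real.pi * Real.exp (1/6))) * Real.sqrt ((S:ℝ)+1) ≤ (S:ℝ)+1 := by
    intro S
    have h1 : Real.sqrt ((S:ℝ)+1) ≤ (S:ℝ)+1 := by
      calc Real.sqrt ((S:ℝ)+1) ≤ Real.sqrt (((S:ℝ)+1)^2) := by
            apply Real.sqrt_le_sqrt
            nlinarith [Nat.cast_nonneg (α := ℝ) S]
        _ = (S:ℝ)+1 := Real.sqrt_sq (by positivity)
    calc Real.sqrt (2 / (Real.pi * Real.exp (1/6))) * Real.sqrt ((S:ℝ)+1)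
        ≤ 1 * Real.sqrt ((S:ℝ)+1) := mul_le_mul_of_nonneg_right hc1 (Real.sqrt_nonneg _)
      _ = Real.sqrt ((S:ℝ)+1) := one_mul _
      _ ≤ (S:ℝ)+1 := h1
  rcases Nat.eq_zero_or_pos ℓ with rfl | hl1
  · simpa using htriv T
  rcases eq_or_lt_of_le hℓ with rfl | hlt
  · have hne : (ℓ:ℝ) ≠ 0 := by positivity
    simpa [Nat.sub_self, Nat.choose_self, div_self hne] using htriv ℓ
  -- main case : 1 ≤ ℓ < T
  obtain ⟨m, rfl⟩ : ∃ m, T = ℓ + m := ⟨T - ℓ, by omega⟩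
  have hm1 : 1 ≤ m := by omega
  have hL0 : (0:ℝ) < ℓ := by exact_mod_cast hl1
  have hM0 : (0:ℝ) < m := by exact_mod_cast hm1
  have hT0 : (0:ℝ) < (ℓ:ℝ)+m := by linarith
  have hsub : 1 - (ℓ:ℝ)/((ℓ:ℝ)+(m:ℝ)) = (m:ℝ)/((ℓ:ℝ)+(m:ℝ)) := by
    field_simp
    ring
  have hfT := fact_ge (ℓ+m) (by omega)
  have hfl := fact_le ℓ hl1
  have hfm := fact_le m hm1
  push_cast at hfT
  have hC : (Nat.choose (ℓ+m) ℓ : ℝ) = ((ℓ+m)! : ℝ) / ((ℓ ! : ℝ) * (m ! : ℝ)) := by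
    rw [eq_div_iff (by positivity), ← mul_assoc]
    have h := Nat.choose_mul_factorial_mul_factorial (Nat.le_add_right ℓ m)
    rw [Nat.add_sub_cancel_left] at h
    exact_mod_cast h
  have hchoose_ge :
      (Real.sqrt π * (Real.sqrt (2*((ℓ:ℝ)+(m:ℝ))) * (((ℓ:ℝ)+(m:ℝ))/Real.exp 1)^(ℓ+m))) /
        ((Real.sqrt π * Real.exp (1/(12*(ℓ:ℝ))) * (Real.sqrt (2*(ℓ:ℝ)) * ((ℓ:ℝ)/Real.exp 1)^ℓ)) *
         (Real.sqrt π * Real.exp (1/(12*(m:ℝ))) * (Real.sqrt (2*(m:ℝ)) * ((m:ℝ)/Real.exp 1)^m)))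
      ≤ (Nat.choose (ℓ+m) ℓ : ℝ) := by
    rw [hC]
    refine div_le_div₀ (by positivity) hfT (by positivity) ?_
    exact mul_le_mul hfl hfm (by positivity) (by positivity)
  have hkey : ((ℓ:ℝ)/((ℓ:ℝ)+(m:ℝ)))^ℓ * ((m:ℝ)/((ℓ:ℝ)+(m:ℝ)))^m * (((ℓ:ℝ)+(m:ℝ))/Real.exp 1)^(ℓ+m)
      = ((ℓ:ℝ)/Real.exp 1)^ℓ * ((m:ℝ)/Real.exp 1)^m := by
    have e1 : ((ℓ:ℝ)/((ℓ:ℝ)+(m:ℝ))) * (((ℓ:ℝ)+(m:ℝ))/Real.exp 1) = (ℓ:ℝ)/Real.exp 1 := by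
      field_simp
    have e2 : ((m:ℝ)/((ℓ:ℝ)+(m:ℝ))) * (((ℓ:ℝ)+(m:ℝ))/Real.exp 1) = (m:ℝ)/Real.exp 1 := by
      field_simp
    calc ((ℓ:ℝ)/((ℓ:ℝ)+(m:ℝ)))^ℓ * ((m:ℝ)/((ℓ:ℝ)+(m:ℝ)))^m * (((ℓ:ℝ)+(m:ℝ))/Real.exp 1)^(ℓ+m)
        = (((ℓ:ℝ)/((ℓ:ℝ)+(m:ℝ))) * (((ℓ:ℝ)+(m:ℝ))/Real.exp 1))^ℓ *
          (((m:ℝ)/((ℓ:ℝ)+(m:ℝ))) * (((ℓ:ℝ)+(m:ℝ))/Real.exp 1))^m := by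
          rw [pow_add, mul_pow, mul_pow]; ring
      _ = ((ℓ:ℝ)/Real.exp 1)^ℓ * ((m:ℝ)/Real.exp 1)^m := by rw [e1, e2]
  have hQeq :
      (((ℓ:ℝ)+(m:ℝ)+1) * ((ℓ:ℝ)/((ℓ:ℝ)+(m:ℝ)))^ℓ * ((m:ℝ)/((ℓ:ℝ)+(m:ℝ)))^m) *
        ((Real.sqrt π * (Real.sqrt (2*((ℓ:ℝ)+(m:ℝ))) * (((ℓ:ℝ)+(m:ℝ))/Real.exp 1)^(ℓ+m))) /
        ((Real.sqrt π * Real.exp (1/(12*(ℓ:ℝ))) * (Real.sqrt (2*(ℓ:ℝ)) * ((ℓ:ℝ)/Real.exp 1)^ℓ)) *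
         (Real.sqrt π * Real.exp (1/(12*(m:ℝ))) * (Real.sqrt (2*(m:ℝ)) * ((m:ℝ)/Real.exp 1)^m))))
      = (((ℓ:ℝ)+(m:ℝ)+1) * Real.sqrt (2*((ℓ:ℝ)+(m:ℝ)))) /
        (Real.sqrt π * Real.exp (1/(12*(ℓ:ℝ))) * Real.exp (1/(12*(m:ℝ))) *
          (Real.sqrt (2*(ℓ:ℝ)) * Real.sqrt (2*(m:ℝ)))) := by
    rw [← mul_div_assoc]
    rw [div_eq_div_iff (by positivity) (by positivity)]
    linear_combination (((ℓ:ℝ)+(m:ℝ)+1) * Real.sqrt π ^2 * Real.exp (1/(12*(ℓ:ℝ))) *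
      Real.exp (1/(12*(m:ℝ))) * Real.sqrt (2*(ℓ:ℝ)) * Real.sqrt (2*(m:ℝ)) *
      Real.sqrt (2*((ℓ:ℝ)+(m:ℝ)))) * hkey
  have hE1sq : Real.exp (1/(12*(ℓ:ℝ)))^2 = Real.exp (1/(6*(ℓ:ℝ))) := by
    rw [sq, ← Real.exp_add]
    congr 1
    field_simp
    ring
  have hE2sq : Real.exp (1/(12*(m:ℝ)))^2 = Real.exp (1/(6*(m:ℝ))) := by
    rw [sq, ← Real.exp_add]
    congr 1
    field_simp
    ring
  have hkey2 : 4*(ℓ:ℝ)*(m:ℝ)*(Real.exp (1/(12*(ℓ:ℝ)))^2 * Real.exp (1/(12*(m:ℝ)))^2) ≤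
      ((ℓ:ℝ)+(m:ℝ))*(((ℓ:ℝ)+(m:ℝ))+1)*Real.exp (1/6) := by
    rw [hE1sq, hE2sq]; exact key_ineq ℓ m hl1 hm1
  have hfinal : Real.sqrt (2 / (Real.pi * Real.exp (1/6))) * Real.sqrt ((ℓ:ℝ)+(m:ℝ)+1) ≤
      (((ℓ:ℝ)+(m:ℝ)+1) * Real.sqrt (2*((ℓ:ℝ)+(m:ℝ)))) /
        (Real.sqrt π * Real.exp (1/(12*(ℓ:ℝ))) * Real.exp (1/(12*(m:ℝ))) *
          (Real.sqrt (2*(ℓ:ℝ)) * Real.sqrt (2*(m:ℝ)))) := by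
    rw [← Real.sqrt_mul (by positivity) ((ℓ:ℝ)+(m:ℝ)+1)]
    have hQ0 : (0:ℝ) ≤ (((ℓ:ℝ)+(m:ℝ)+1) * Real.sqrt (2*((ℓ:ℝ)+(m:ℝ)))) /
        (Real.sqrt π * Real.exp (1/(12*(ℓ:ℝ))) * Real.exp (1/(12*(m:ℝ))) *
          (Real.sqrt (2*(ℓ:ℝ)) * Real.sqrt (2*(m:ℝ)))) := by positivity
    have target2 : 2 / (Real.pi * Real.exp (1/6)) * ((ℓ:ℝ)+(m:ℝ)+1) ≤
        ((((ℓ:ℝ)+(m:ℝ)+1) * Real.sqrt (2*((ℓ:ℝ)+(m:ℝ)))) /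
        (Real.sqrt π * Real.exp (1/(12*(ℓ:ℝ))) * Real.exp (1/(12*(m:ℝ))) *
          (Real.sqrt (2*(ℓ:ℝ)) * Real.sqrt (2*(m:ℝ)))))^2 := by
      rw [div_pow]
      simp only [mul_pow]
      rw [Real.sq_sqrt (show (0:ℝ) ≤ 2*((ℓ:ℝ)+(m:ℝ)) by positivity),
        Real.sq_sqrt (show (0:ℝ) ≤ π from Real.pi_pos.le),
        Real.sq_sqrt (show (0:ℝ) ≤ 2*(ℓ:ℝ) by positivity),
        Real.sq_sqrt (show (0:ℝ) ≤ 2*(m:ℝ) by positivity)]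
      rw [div_mul_eq_mul_div, div_le_div_iff₀ (by positivity) (by positivity)]
      nlinarith [mul_le_mul_of_nonneg_left hkey2
        (show (0:ℝ) ≤ 2*π*((ℓ:ℝ)+(m:ℝ)+1) by positivity), Real.pi_pos,
        Real.exp_pos (1/6:ℝ)]
    calc Real.sqrt (2 / (Real.pi * Real.exp (1/6)) * ((ℓ:ℝ)+(m:ℝ)+1))
        ≤ Real.sqrt (((((ℓ:ℝ)+(m:ℝ)+1) * Real.sqrt (2*((ℓ:ℝ)+(m:ℝ)))) /
          (Real.sqrt π * Real.exp (1/(12*(ℓ:ℝ))) * Real.exp (1/(12*(m:ℝ))) *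
            (Real.sqrt (2*(ℓ:ℝ)) * Real.sqrt (2*(m:ℝ)))))^2) := Real.sqrt_le_sqrt target2
      _ = _ := Real.sqrt_sq hQ0
  rw [ge_iff_le, show ℓ + m - ℓ = m from by omega]
  push_cast
  rw [hsub]
  calc Real.sqrt (2 / (Real.pi * Real.exp (1/6))) * Real.sqrt ((ℓ:ℝ)+(m:ℝ)+1)
      ≤ _ := hfinal
    _ = (((ℓ:ℝ)+(m:ℝ)+1) * ((ℓ:ℝ)/((ℓ:ℝ)+(m:ℝ)))^ℓ * ((m:ℝ)/((ℓ:ℝ)+(m:ℝ)))^m) *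
        ((Real.sqrt π * (Real.sqrt (2*((ℓ:ℝ)+(m:ℝ))) * (((ℓ:ℝ)+(m:ℝ))/Real.exp 1)^(ℓ+m))) /
        ((Real.sqrt π * Real.exp (1/(12*(ℓ:ℝ))) * (Real.sqrt (2*(ℓ:ℝ)) * ((ℓ:ℝ)/Real.exp 1)^ℓ)) *
         (Real.sqrt π * Real.exp (1/(12*(m:ℝ))) * (Real.sqrt (2*(m:ℝ)) * ((m:ℝ)/Real.exp 1)^m)))) :=
        hQeq.symm
    _ ≤ (((ℓ:ℝ)+(m:ℝ)+1) * ((ℓ:ℝ)/((ℓ:ℝ)+(m:ℝ)))^ℓ * ((m:ℝ)/((ℓ:ℝ)+(m:ℝ)))^m) *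
        (Nat.choose (ℓ+m) ℓ : ℝ) :=
        mul_le_mul_of_nonneg_left hchoose_ge (by positivity)
    _ = ((ℓ:ℝ)+(m:ℝ)+1) * ((ℓ:ℝ)/((ℓ:ℝ)+(m:ℝ)))^ℓ * ((m:ℝ)/((ℓ:ℝ)+(m:ℝ)))^m *
        (Nat.choose (ℓ+m) ℓ : ℝ) := by ring
end

section
/- Let N ∈ ℕ, p = 1/N, and let (ℓ_t)_{t≥1} be the running loss counts of a binary sequence (so ℓ_t − ℓ_{t−1} ∈ {0,1}). If ℓ_N ≥ 1 and there exists T ≥ N with ℓ_T/T ≤ p, then there exists T̃ ≤ T such that ℓ_{T̃}/T̃ = p exactly. -/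
lemma ivt_int (g : ℕ → ℤ) (hg : ∀ t, g t - 1 ≤ g (t + 1)) :
    ∀ b a, a ≤ b → 0 ≤ g a → g b ≤ 0 → ∃ t, a ≤ t ∧ t ≤ b ∧ g t = 0 := by
  intro b
  induction b with
  | zero => intro a ha h0 h1
            have : a = 0 := Nat.le_zero.mp ha
            subst this
            exact ⟨0, le_refl 0, le_refl 0, le_antisymm h1 h0⟩
  | succ b ih =>
    intro a ha h0 h1
    rcases Nat.lt_or_ge a (b+1) with h | h
    · have hab : a ≤ b := Nat.lt_succ_iff.mp h
      rcases le_or_gt (g b) 0 with hb | hb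
      · obtain ⟨t, ht1, ht2, ht3⟩ := ih a hab h0 hb
        exact ⟨t, ht1, ht2.trans (Nat.le_succ b), ht3⟩
      · have : g b - 1 ≤ g (b+1) := hg b
        have : (0:ℤ) ≤ g (b+1) := by omega
        exact ⟨b+1, Nat.le_succ_of_le hab, le_refl _, le_antisymm h1 this⟩
    · have heq : a = b + 1 := le_antisymm ha h
      exact ⟨a, le_refl _, heq ▸ le_refl _, le_antisymm (heq ▸ h1) h0⟩

/-- If `p = 1/N`, the running loss count `ℓ_t` of a binary sequence satisfies
`ℓ_N ≥ 1`, and `ℓ_T/T ≤ p` for some `T ≥ N`, then the proportion of losses hits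
`p` exactly at some time `T̃ ≤ T`. -/
theorem stmt6 (N : ℕ) (hN : 1 ≤ N) (ℓ : ℕ → ℕ) (h0 : ℓ 0 = 0)
    (hstep : ∀ t, ℓ (t + 1) = ℓ t ∨ ℓ (t + 1) = ℓ t + 1)
    (hℓN : 1 ≤ ℓ N) (T : ℕ) (hT : N ≤ T)
    (hle : (ℓ T : ℝ) / T ≤ 1 / N) :
    ∃ T' ≤ T, (ℓ T' : ℝ) / T' = 1 / N := by
  set g : ℕ → ℤ := fun t => (N : ℤ) * ℓ t - t with hg
  have hgstep : ∀ t, g t - 1 ≤ g (t + 1) := by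
    intro t
    rcases hstep t with h | h <;> simp [hg, h] <;> push_cast <;> nlinarith [Nat.one_le_iff_ne_zero.mp hN]
  have hTpos : 0 < T := lt_of_lt_of_le hN hT
  have hNpos : (0:ℝ) < N := by exact_mod_cast hN
  have hTposR : (0:ℝ) < T := by exact_mod_cast hTpos
  have hgT : g T ≤ 0 := by
    have : (N : ℝ) * ℓ T ≤ T := by
      rw [div_le_div_iff₀ hTposR hNpos] at hle
      linarith
    have : (N : ℕ) * ℓ T ≤ T := by exact_mod_cast this
    simp [hg]
    exact_mod_cast this
  have hgN : 0 ≤ g N := by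
    simp [hg]
    have : (N:ℤ) * 1 ≤ (N:ℤ) * ℓ N := by
      apply mul_le_mul_of_nonneg_left _ (by positivity)
      exact_mod_cast hℓN
    omega
  obtain ⟨t, ht1, ht2, ht3⟩ := ivt_int g hgstep T N hT hgN hgT
  refine ⟨t, ht2, ?_⟩
  have htpos : 0 < t := lt_of_lt_of_le hN ht1
  have htR : (0:ℝ) < t := by exact_mod_cast htpos
  have heq : (N:ℤ) * ℓ t = t := by simp [hg] at ht3; omega
  have heqR : (N:ℝ) * ℓ t = t := by exact_mod_cast heq
  rw [div_eq_div_iff htR.ne' hNpos.ne']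
  linarith
end

section
/- Let α ∈ (0,1), N = ⌈√(2π·e^{1/6})/α⌉ and p = 1/N. For any binary sequence with running loss counts ℓ_t, if (1 + ℓ_T)/(T+1) ≤ p for some T, then there exists T̃ ≤ T with W_{T̃}^p(ℓ_{T̃}) ≥ 1/α, where W_t^p(ℓ) = (t+1)·p^ℓ·(1−p)^{t−ℓ}·C(t,ℓ). -/
open Real

lemma stirling_low (n : ℕ) (hn : 1 ≤ n) :
    Real.sqrt π * (Real.sqrt (2*n) * ((n:ℝ)/Real.exp 1)^n) ≤ (n.factorial : ℝ) := by
  have h1 : Real.sqrt π ≤ Stirling.stirlingSeq n := by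
    obtain ⟨m, rfl⟩ := Nat.exists_eq_add_of_le hn
    have := Stirling.stirlingSeq'_antitone.le_of_tendsto
      (Stirling.tendsto_stirlingSeq_sqrt_pi.comp (Filter.tendsto_add_atTop_nat 1)) m
    simpa [Function.comp, Nat.succ_eq_add_one, Nat.add_comm] using this
  have hpos : 0 < Real.sqrt (2*n) * ((n:ℝ)/Real.exp 1)^n := by
    have : (0:ℝ) < n := by exact_mod_cast hn
    positivity
  have := mul_le_mul_of_nonneg_right h1 hpos.le
  rwa [Stirling.stirlingSeq, div_mul_cancel₀] at this
  exact hpos.ne'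

lemma stirling_high (n : ℕ) (hn : 1 ≤ n) :
    (n.factorial : ℝ) ≤ (Real.exp 1 / Real.sqrt 2) * (Real.sqrt (2*n) * ((n:ℝ)/Real.exp 1)^n) := by
  have h1 : Stirling.stirlingSeq n ≤ Real.exp 1 / Real.sqrt 2 := by
    obtain ⟨m, rfl⟩ := Nat.exists_eq_add_of_le hn
    have := Stirling.stirlingSeq'_antitone (Nat.zero_le m)
    simpa [Function.comp, Nat.succ_eq_add_one, Nat.add_comm] using this
  have hpos : 0 < Real.sqrt (2*n) * ((n:ℝ)/Real.exp 1)^n := by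
    have : (0:ℝ) < n := by exact_mod_cast hn
    positivity
  have := mul_le_mul_of_nonneg_right h1 hpos.le
  rwa [Stirling.stirlingSeq, div_mul_cancel₀] at this
  exact hpos.ne'

lemma binom_bound (k j : ℕ) (hk : 1 ≤ k) (hj : 1 ≤ j) :
    Real.sqrt (2*π*(k+j)) / ((Real.exp 1)^2 * Real.sqrt ((k:ℝ)*j)) ≤
    ((k+j).choose k : ℝ) * ((k:ℝ)/((k:ℝ)+j))^k * ((j:ℝ)/((k:ℝ)+j))^j := by
  have he : (0:ℝ) < Real.exp 1 := Real.exp_pos 1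
  have hk0 : (0:ℝ) < k := by exact_mod_cast hk
  have hj0 : (0:ℝ) < j := by exact_mod_cast hj
  have hn0 : (0:ℝ) < ((k:ℝ)+j) := by linarith
  have hsk : (0:ℝ) < Real.sqrt k := Real.sqrt_pos.2 hk0
  have hsj : (0:ℝ) < Real.sqrt j := Real.sqrt_pos.2 hj0
  have hs2 : (0:ℝ) < Real.sqrt 2 := by positivity
  have hchoose : ((k+j).choose k : ℝ) = ((k+j).factorial : ℝ) / ((k.factorial : ℝ) * (j.factorial : ℝ)) := by
    have h := Nat.choose_mul_factorial_mul_factorial (Nat.le_add_right k j)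
    rw [Nat.add_sub_cancel_left] at h
    have h' : (((k+j).choose k : ℝ)) * (k.factorial : ℝ) * (j.factorial : ℝ) = ((k+j).factorial : ℝ) := by
      exact_mod_cast congrArg (Nat.cast : ℕ → ℝ) h
    field_simp
    linarith [h']
  set A : ℝ := Real.sqrt π * (Real.sqrt (2*((k:ℝ)+j)) * (((k:ℝ)+j)/Real.exp 1)^(k+j)) with hA
  set B : ℝ := (Real.exp 1 / Real.sqrt 2) * (Real.sqrt (2*k) * ((k:ℝ)/Real.exp 1)^k) with hB
  set C : ℝ := (Real.exp 1 / Real.sqrt 2) * (Real.sqrt (2*j) * ((j:ℝ)/Real.exp 1)^j) with hC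
  have hBpos : 0 < B := by rw [hB]; positivity
  have hCpos : 0 < C := by rw [hC]; positivity
  have hApos : 0 < A := by rw [hA]; positivity
  have hlow : A ≤ ((k+j).factorial : ℝ) := by
    have := stirling_low (k+j) (by omega)
    rw [hA]; push_cast at this; convert this using 4
  have hfacpos : (0:ℝ) < (k.factorial : ℝ) * (j.factorial : ℝ) := by positivity
  have hdiv : A / (B * C) ≤ ((k+j).factorial : ℝ) / ((k.factorial : ℝ) * (j.factorial : ℝ)) := by
    apply div_le_div₀ (by positivity) hlow hfacpos
    exact mul_le_mul (stirling_high k hk) (stirling_high j hj) (by positivity) hBpos.le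
  have hXpos : (0:ℝ) < ((k:ℝ)/((k:ℝ)+j))^k * ((j:ℝ)/((k:ℝ)+j))^j := by positivity
  have hmul := mul_le_mul_of_nonneg_right hdiv hXpos.le
  rw [← hchoose] at hmul
  have hpow : (((k:ℝ)+j)/Real.exp 1)^(k+j) * ((k:ℝ)/((k:ℝ)+j))^k * ((j:ℝ)/((k:ℝ)+j))^j
      = ((k:ℝ)/Real.exp 1)^k * ((j:ℝ)/Real.exp 1)^j := by
    rw [pow_add]
    rw [show (((k:ℝ)+j)/Real.exp 1)^k * (((k:ℝ)+j)/Real.exp 1)^j * ((k:ℝ)/((k:ℝ)+j))^k * ((j:ℝ)/((k:ℝ)+j))^j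
        = ((((k:ℝ)+j)/Real.exp 1) * ((k:ℝ)/((k:ℝ)+j)))^k * ((((k:ℝ)+j)/Real.exp 1) * ((j:ℝ)/((k:ℝ)+j)))^j by
      rw [mul_pow, mul_pow]; ring]
    congr 2 <;> field_simp <;> ring
  have hsqrt1 : Real.sqrt (2*π*((k:ℝ)+j)) = Real.sqrt π * Real.sqrt (2*((k:ℝ)+j)) := by
    rw [← Real.sqrt_mul pi_pos.le]; ring_nf
  have hsqrt2 : Real.sqrt ((k:ℝ)*j) = Real.sqrt k * Real.sqrt j := Real.sqrt_mul hk0.le _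
  have hsqrt3 : Real.sqrt (2*(k:ℝ)) = Real.sqrt 2 * Real.sqrt k := Real.sqrt_mul (by norm_num) _
  have hsqrt4 : Real.sqrt (2*(j:ℝ)) = Real.sqrt 2 * Real.sqrt j := Real.sqrt_mul (by norm_num) _
  have hck : ((k:ℝ)/Real.exp 1)^k ≠ 0 := by positivity
  have hcj : ((j:ℝ)/Real.exp 1)^j ≠ 0 := by positivity
  have expand : A / (B*C) * (((k:ℝ)/((k:ℝ)+j))^k * ((j:ℝ)/((k:ℝ)+j))^j)
      = Real.sqrt π * Real.sqrt (2*((k:ℝ)+j)) * ((((k:ℝ)+j)/Real.exp 1)^(k+j) * ((k:ℝ)/((k:ℝ)+j))^k * ((j:ℝ)/((k:ℝ)+j))^j) / (B*C) := by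
    ring
  calc Real.sqrt (2*π*((k:ℝ)+(j:ℝ))) / ((Real.exp 1)^2 * Real.sqrt ((k:ℝ)*j))
      = A / (B * C) * (((k:ℝ)/((k:ℝ)+j))^k * ((j:ℝ)/((k:ℝ)+j))^j) := by
        rw [hsqrt1, hsqrt2, expand, hpow, hB, hC, hsqrt3, hsqrt4]
        field_simp
    _ ≤ ((k+j).choose k : ℝ) * (((k:ℝ)/((k:ℝ)+j))^k * ((j:ℝ)/((k:ℝ)+j))^j) := hmul
    _ = ((k+j).choose k : ℝ) * ((k:ℝ)/((k:ℝ)+j))^k * ((j:ℝ)/((k:ℝ)+j))^j := by ring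


lemma exp_sixth : (85/72 : ℝ) ≤ Real.exp (1/6) := by
  by_contra h
  push_neg at h
  have h1 : Real.exp (1/6) ^ 6 < (85/72:ℝ)^6 :=
    pow_lt_pow_left₀ h (Real.exp_pos _).le (by norm_num)
  have h2 := Real.exp_nat_mul (1/6) 6
  norm_num at h2
  rw [← h2] at h1
  have h3 : ((85:ℝ)/72)^6 < 2.7182818283 := by norm_num
  linarith [Real.exp_one_gt_d9]

lemma c_ge_e : Real.exp 1 ≤ Real.sqrt (2 * π * Real.exp (1/6)) := by
  rw [show Real.exp 1 = Real.sqrt ((Real.exp 1)^2) from (Real.sqrt_sq (Real.exp_pos 1).le).symm]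
  apply Real.sqrt_le_sqrt
  have hπ := Real.pi_gt_d6
  have he := Real.exp_one_lt_d9
  have h6 := exp_sixth
  nlinarith [Real.exp_pos 1]

lemma c_ge_sqrt2pi : Real.sqrt (2*π) ≤ Real.sqrt (2 * π * Real.exp (1/6)) := by
  apply Real.sqrt_le_sqrt
  nlinarith [exp_sixth, Real.pi_pos]

lemma sqrt_pi_ge : (1.77:ℝ) ≤ Real.sqrt π := by
  rw [show (1.77:ℝ) = Real.sqrt (1.77^2) from (Real.sqrt_sq (by norm_num)).symm]
  apply Real.sqrt_le_sqrt
  nlinarith [Real.pi_gt_d6]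

lemma sqrt_2pi_ge : (2.5:ℝ) ≤ Real.sqrt (2*π) := by
  rw [show (2.5:ℝ) = Real.sqrt (2.5^2) from (Real.sqrt_sq (by norm_num)).symm]
  apply Real.sqrt_le_sqrt
  nlinarith [Real.pi_gt_d6]

lemma exp_sq_le : (Real.exp 1)^2 ≤ 7.389057 := by
  nlinarith [Real.exp_one_lt_d9, Real.exp_pos 1]

lemma one_sub_inv_pow (N : ℕ) (h2 : 2 ≤ N) :
    Real.exp (-1) ≤ (1 - 1/(N:ℝ))^(N-1) := by
  obtain ⟨M, rfl⟩ : ∃ M, N = M + 1 := ⟨N - 1, by omega⟩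
  have hM : 1 ≤ M := by omega
  have hM0 : (0:ℝ) < M := by exact_mod_cast hM
  have h1 : (1 : ℝ) - 1/((M:ℝ)+1) = (M:ℝ)/((M:ℝ)+1) := by field_simp; ring
  have hstep : Real.exp (-(1/(M:ℝ))) ≤ (M:ℝ)/((M:ℝ)+1) := by
    have h3 : (M:ℝ)+1 ≤ (M:ℝ) * Real.exp (1/(M:ℝ)) := by
      have := Real.add_one_le_exp (1/(M:ℝ))
      have := mul_le_mul_of_nonneg_left this hM0.le
      calc (M:ℝ)+1 = (M:ℝ)*(1/(M:ℝ)+1) := by field_simp; try ring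
        _ ≤ (M:ℝ) * Real.exp (1/(M:ℝ)) := by assumption
    rw [Real.exp_neg]
    rw [inv_le_iff_one_le_mul₀ (Real.exp_pos _)]
    rw [div_mul_eq_mul_div, le_div_iff₀ (by positivity : (0:ℝ) < (M:ℝ)+1)]
    linarith [h3]
  have h4 : Real.exp (-(1/(M:ℝ)))^M = Real.exp (-1) := by
    rw [← Real.exp_nat_mul]
    congr 1
    field_simp
  calc Real.exp (-1) = Real.exp (-(1/(M:ℝ)))^M := h4.symm
    _ ≤ ((M:ℝ)/((M:ℝ)+1))^M := pow_le_pow_left₀ (Real.exp_pos _).le hstep M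
    _ = (1 - 1/((M:ℝ)+1))^M := by rw [h1]
    _ = (1 - 1/(((M+1:ℕ)):ℝ))^(M+1-1) := by push_cast; norm_num

lemma base_bound (N : ℕ) (α : ℝ) (hα0 : 0 < α) (h2 : 2 ≤ N)
    (hNα : Real.exp 1 / α ≤ (N:ℝ)) :
    1/α ≤ (N:ℝ) * (1 - 1/(N:ℝ))^(N-1) := by
  have h := one_sub_inv_pow N h2
  have hN0 : (0:ℝ) < N := by exact_mod_cast (by omega : 0 < N)
  have key : 1/α ≤ (N:ℝ) * Real.exp (-1) := by
    have e1 : (0:ℝ) < Real.exp 1 := Real.exp_pos 1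
    have h5 := mul_le_mul_of_nonneg_right hNα (inv_nonneg.2 e1.le)
    rw [Real.exp_neg]
    calc 1/α = Real.exp 1/α * (Real.exp 1)⁻¹ := by field_simp
      _ ≤ (N:ℝ) * (Real.exp 1)⁻¹ := h5
  calc 1/α ≤ (N:ℝ) * Real.exp (-1) := key
    _ ≤ (N:ℝ) * (1 - 1/(N:ℝ))^(N-1) := mul_le_mul_of_nonneg_left h hN0.le

lemma num_core (x l α : ℝ) (hx : 2 ≤ x) (hl : 2 ≤ l) (hα0 : 0 < α)
    (hxα : Real.sqrt (2*π)/α ≤ x) :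
    1/α ≤ (x*l+1) * (Real.sqrt (2*π*(x*l)) / ((Real.exp 1)^2 * Real.sqrt (l*((x-1)*l)))) := by
  have hπ := Real.pi_pos
  have hsπ := sqrt_pi_ge
  have hs2π := sqrt_2pi_ge
  have he2 := exp_sq_le
  have he2pos : (0:ℝ) < (Real.exp 1)^2 := by positivity
  have hbpos : (0:ℝ) < l*((x-1)*l) :=
    mul_pos (by linarith) (mul_pos (by linarith) (by linarith))
  have hsb : (0:ℝ) < Real.sqrt (l*((x-1)*l)) := Real.sqrt_pos.2 hbpos
  have step1 : (2*Real.sqrt π/l) * Real.sqrt (l*((x-1)*l)) ≤ Real.sqrt (2*π*(x*l)) := by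
    have h1 : Real.sqrt ((2*Real.sqrt π/l)^2 * (l*((x-1)*l)))
        = (2*Real.sqrt π/l) * Real.sqrt (l*((x-1)*l)) := by
      rw [Real.sqrt_mul (sq_nonneg _), Real.sqrt_sq (by positivity)]
    rw [← h1]
    apply Real.sqrt_le_sqrt
    have hsq : (Real.sqrt π)^2 = π := Real.sq_sqrt hπ.le
    have hl0 : l ≠ 0 := by linarith
    have expand : (2*Real.sqrt π/l)^2 * (l*((x-1)*l)) = 4*π*(x-1) := by
      field_simp
      nlinarith [hsq]
    rw [expand]
    nlinarith [mul_nonneg (mul_nonneg hπ.le (by linarith : (0:ℝ) ≤ x)) (by linarith : (0:ℝ) ≤ l-2)]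
  have step2 : 2*Real.sqrt π/l ≤ Real.sqrt (2*π*(x*l)) / Real.sqrt (l*((x-1)*l)) := by
    rw [le_div_iff₀ hsb]; exact step1
  have e1 : (x*l+1) * (Real.sqrt (2*π*(x*l)) / ((Real.exp 1)^2 * Real.sqrt (l*((x-1)*l))))
      = (x*l+1)/(Real.exp 1)^2 * (Real.sqrt (2*π*(x*l)) / Real.sqrt (l*((x-1)*l))) := by
    field_simp
  have h2 : (x*l+1)/(Real.exp 1)^2 * (2*Real.sqrt π/l)
      ≤ (x*l+1)/(Real.exp 1)^2 * (Real.sqrt (2*π*(x*l)) / Real.sqrt (l*((x-1)*l))) :=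
    mul_le_mul_of_nonneg_left step2 (by positivity)
  have h3 : 2*x*Real.sqrt π/(Real.exp 1)^2 ≤ (x*l+1)/(Real.exp 1)^2 * (2*Real.sqrt π/l) := by
    rw [div_mul_div_comm, div_le_div_iff₀ (by positivity) (by positivity)]
    nlinarith
  have h4 : 1/α ≤ 2*x*Real.sqrt π/(Real.exp 1)^2 := by
    rw [div_le_div_iff₀ hα0 he2pos]
    rw [div_le_iff₀ hα0] at hxα
    nlinarith
  rw [e1]
  linarith


lemma crossing (N : ℕ) (hN2 : 2 ≤ N) (ℓ : ℕ → ℕ) (h0 : ℓ 0 = 0)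
    (hstep : ∀ t, ℓ (t + 1) = ℓ t ∨ ℓ (t + 1) = ℓ t + 1)
    (T : ℕ) (hT : N * (ℓ T + 1) ≤ T + 1) :
    ∃ m ≤ T, (ℓ m = 0 ∧ m + 1 = N) ∨ (1 ≤ ℓ m ∧ m = N * ℓ m) := by
  have hmono : Monotone ℓ := monotone_nat_of_le_succ (fun n => by rcases hstep n with h|h <;> omega)
  have hP : ∃ t, N * (ℓ t + 1) ≤ t + 1 := ⟨T, hT⟩
  set s := Nat.find hP with hsdef
  have hs : N * (ℓ s + 1) ≤ s + 1 := Nat.find_spec hP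
  have hsT : s ≤ T := Nat.find_le hT
  have hs1 : 1 ≤ s := by
    rcases Nat.eq_zero_or_pos s with h | h
    · exfalso
      rw [h] at hs
      rw [show ℓ 0 = 0 from h0] at hs
      omega
    · exact h
  have hprev : ¬ (N * (ℓ (s-1) + 1) ≤ (s-1) + 1) := Nat.find_min hP (by omega)
  rw [show s - 1 + 1 = s by omega] at hprev
  have hflat : ℓ s = ℓ (s-1) := by
    rcases hstep (s-1) with h | h
    · rw [show s - 1 + 1 = s by omega] at h; exact h
    · exfalso
      rw [show s - 1 + 1 = s by omega] at h
      rw [h] at hs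
      have e1 : N * (ℓ (s-1) + 1 + 1) = N * (ℓ (s-1) + 1) + N := by ring
      omega
  rw [← hflat] at hprev
  have hEq : N * (ℓ s + 1) = s + 1 := by omega
  rcases Nat.eq_zero_or_pos (ℓ s) with hL0 | hL1
  · exact ⟨s, hsT, Or.inl ⟨hL0, by rw [hL0] at hEq; omega⟩⟩
  · set L := ℓ s with hLdef
    refine ⟨N*L, ?_, Or.inr ?_⟩
    · have e1 : N * (L + 1) = N * L + N := by ring
      omega
    · have hmlt : N * L < s := by
        have e1 : N * (L + 1) = N * L + N := by ring
        omega
      have hle : ℓ (N*L) ≤ L := hmono hmlt.le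
      have hge : ¬ (N * (ℓ (N*L) + 1) ≤ N*L + 1) := Nat.find_min hP hmlt
      constructor
      · by_contra hc
        push_neg at hc
        have h00 : ℓ (N*L) = 0 := by omega
        rw [h00] at hge
        have h2 : N ≤ N * L := by
          calc N = N*1 := by ring
            _ ≤ N*L := Nat.mul_le_mul_left N hL1
        omega
      · have : L ≤ ℓ (N*L) := by
          by_contra hc
          push_neg at hc
          have : ℓ (N*L) + 1 ≤ L := hc
          have : N * (ℓ (N*L) + 1) ≤ N * L := Nat.mul_le_mul_left N this
          omega
        have hEq2 : ℓ (N*L) = L := le_antisymm hle this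
        rw [hEq2]



/-- If the permutation p-value `(1+ℓ_T)/(T+1)` drops to `p = 1/⌈√(2π e^{1/6})/α⌉`
or below at some time `T`, then the binomial-strategy wealth with parameter `p`
reaches `1/α` at some time `T̃ ≤ T`. -/
theorem stmt7 (α : ℝ) (hα0 : 0 < α) (hα1 : α < 1)
    (N : ℕ) (hN : N = ⌈Real.sqrt (2 * Real.pi * Real.exp (1 / 6)) / α⌉₊)
    (ℓ : ℕ → ℕ) (h0 : ℓ 0 = 0)
    (hstep : ∀ t, ℓ (t + 1) = ℓ t ∨ ℓ (t + 1) = ℓ t + 1)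
    (T : ℕ) (hT : (1 + (ℓ T : ℝ)) / ((T : ℝ) + 1) ≤ 1 / N) :
    ∃ T' ≤ T,
      ((T' : ℝ) + 1) * ((1 : ℝ) / N) ^ (ℓ T') * (1 - 1 / (N : ℝ)) ^ (T' - ℓ T')
          * (Nat.choose T' (ℓ T') : ℝ)
        ≥ 1 / α := by
  have hπ := Real.pi_pos
  have hNα : Real.sqrt (2*π*Real.exp (1/6)) / α ≤ (N:ℝ) := by rw [hN]; exact Nat.le_ceil _
  have hNe : Real.exp 1 / α ≤ (N:ℝ) := le_trans ((div_le_div_iff_of_pos_right hα0).2 c_ge_e) hNα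
  have h2πN : Real.sqrt (2*π)/α ≤ (N:ℝ) :=
    le_trans ((div_le_div_iff_of_pos_right hα0).2 c_ge_sqrt2pi) hNα
  have hN2 : 2 ≤ N := by
    by_contra h
    push_neg at h
    have h1 : (N:ℝ) ≤ 1 := by exact_mod_cast Nat.lt_succ_iff.mp h
    have he : (2:ℝ) < Real.exp 1 := by nlinarith [Real.exp_one_gt_d9]
    have h3 : Real.exp 1 ≤ Real.exp 1 / α := by
      rw [le_div_iff₀ hα0]; nlinarith [Real.exp_pos 1]
    linarith
  have hN0 : (0:ℝ) < N := by
    have : 0 < N := by omega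
    exact_mod_cast this
  have hTn : N * (ℓ T + 1) ≤ T + 1 := by
    rw [div_le_div_iff₀ (by positivity : (0:ℝ) < (T:ℝ)+1) hN0] at hT
    have h5 : ((N * (ℓ T + 1) : ℕ) : ℝ) ≤ ((T + 1 : ℕ) : ℝ) := by push_cast; nlinarith
    exact_mod_cast h5
  obtain ⟨m, hmT, hcase⟩ := crossing N hN2 ℓ h0 hstep T hTn
  refine ⟨m, hmT, ?_⟩
  rw [ge_iff_le]
  rcases hcase with ⟨hm0, hmN⟩ | ⟨hL1, hmEq⟩
  · -- ℓ m = 0, m + 1 = N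
    rw [hm0]
    simp only [pow_zero, Nat.choose_zero_right, Nat.cast_one, mul_one, Nat.sub_zero]
    have hc1 : ((m:ℝ) + 1) = N := by exact_mod_cast hmN
    rw [hc1, show m = N - 1 by omega]
    exact base_bound N α hα0 hN2 hNe
  · obtain ⟨L, hLdef⟩ : ∃ L, ℓ m = L := ⟨ℓ m, rfl⟩
    rw [hLdef] at hL1 hmEq ⊢
    rcases eq_or_lt_of_le hL1 with hL1' | hL2
    · -- L = 1, m = N
      rw [← hL1'] at hmEq ⊢
      rw [show N * 1 = N from by ring] at hmEq
      rw [hmEq]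
      simp only [pow_one, Nat.choose_one_right]
      have hq0 : (0:ℝ) ≤ 1 - 1/(N:ℝ) := by
        rw [sub_nonneg]
        rw [div_le_one hN0]
        exact_mod_cast (by omega : 1 ≤ N)
      have heq : ((N:ℝ)+1) * (1/(N:ℝ)) * (1-1/(N:ℝ))^(N-1) * (N:ℝ)
          = ((N:ℝ)+1) * (1-1/(N:ℝ))^(N-1) := by
        field_simp
      rw [heq]
      calc 1/α ≤ (N:ℝ) * (1-1/(N:ℝ))^(N-1) := base_bound N α hα0 hN2 hNe
        _ ≤ ((N:ℝ)+1) * (1-1/(N:ℝ))^(N-1) := by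
            apply mul_le_mul_of_nonneg_right (by linarith) (by positivity)
    · -- L ≥ 2
      have hL2' : 2 ≤ L := hL2
      set j := (N-1)*L with hjdef
      have hj1 : 1 ≤ j := by
        have : 1*1 ≤ (N-1)*L := Nat.mul_le_mul (by omega) (by omega)
        omega
      have hkj : L + j = N*L := by
        have h7 : N = 1 + (N-1) := by omega
        calc L + (N-1)*L = (1+(N-1))*L := by ring
          _ = N*L := by rw [← h7]
      have bb := binom_bound L j hL1 hj1
      have hjr : (j:ℝ) = ((N:ℝ)-1)*(L:ℝ) := by
        rw [hjdef]
        push_cast [Nat.cast_sub (by omega : 1 ≤ N)]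
        ring
      have hsumr : (L:ℝ)+(j:ℝ) = (N:ℝ)*(L:ℝ) := by rw [hjr]; ring
      have hLr0 : (0:ℝ) < L := by exact_mod_cast (by omega : 0 < L)
      have hb1 : (L:ℝ)/((L:ℝ)+(j:ℝ)) = 1/(N:ℝ) := by
        rw [hsumr]
        field_simp
      have hb2 : (j:ℝ)/((L:ℝ)+(j:ℝ)) = 1-1/(N:ℝ) := by
        rw [hsumr, hjr]
        field_simp
      rw [hb1, hb2] at bb
      rw [hsumr] at bb
      rw [hjr] at bb
      rw [hkj] at bb
      have hNr : (2:ℝ) ≤ (N:ℝ) := by exact_mod_cast hN2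
      have hLr : (2:ℝ) ≤ (L:ℝ) := by exact_mod_cast hL2'
      have nc := num_core (N:ℝ) (L:ℝ) α hNr hLr hα0 h2πN
      have hsub : m - L = j := by
        rw [hmEq, hjdef]
        rw [Nat.sub_mul, one_mul]
      rw [hmEq] at hsub ⊢
      rw [hsub]
      calc 1/α ≤ ((N:ℝ)*(L:ℝ)+1) * (Real.sqrt (2*π*((N:ℝ)*(L:ℝ))) /
              ((Real.exp 1)^2 * Real.sqrt ((L:ℝ)*(((N:ℝ)-1)*(L:ℝ))))) := nc
        _ ≤ ((N:ℝ)*(L:ℝ)+1) * (((N*L).choose L : ℝ) * ((1:ℝ)/(N:ℝ))^L * (1-1/(N:ℝ))^j) :=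
            mul_le_mul_of_nonneg_left bb (by positivity)
        _ = (((N*L : ℕ):ℝ)+1) * ((1:ℝ)/(N:ℝ))^L * (1-1/(N:ℝ))^j * ((N*L).choose L : ℝ) := by
            push_cast
            ring
end

section
/- Let I_1, I_2, ... be i.i.d. Bernoulli(q) with q ∈ [0, c), c ∈ (0,1), and L_T = ∑_{t≤T} I_t. Then the binomial-mixture wealth W̄_T = (1 − Bin(L_T; T+1, c))/c converges almost surely to 1/c as T → ∞. If instead q ∈ (c, 1], then W̄_T → 0 almost surely. -/
open MeasureTheory Finset Filter Topology



noncomputable def binB (c : ℝ) (n i : ℕ) : ℝ := (n.choose i : ℝ) * c ^ i * (1 - c) ^ (n - i)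

lemma binB_nonneg {c : ℝ} (hc0 : 0 ≤ c) (hc1 : c ≤ 1) (n i : ℕ) : 0 ≤ binB c n i := by
  have h1 : (0:ℝ) ≤ 1 - c := by linarith
  unfold binB; positivity

lemma binB_sum_one (c : ℝ) (n : ℕ) : ∑ i ∈ range (n + 1), binB c n i = 1 := by
  calc ∑ i ∈ range (n + 1), binB c n i
      = ∑ i ∈ range (n + 1), c ^ i * (1 - c) ^ (n - i) * (n.choose i : ℝ) := by
        apply Finset.sum_congr rfl; intro i _; unfold binB; ring
    _ = (c + (1 - c)) ^ n := (add_pow c (1 - c) n).symm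
    _ = 1 := by norm_num

lemma binB_variance {c : ℝ} (hc0 : 0 ≤ c) (hc1 : c ≤ 1) {n : ℕ} (hn : 0 < n) :
    ∑ i ∈ range (n + 1), (c - (i : ℝ) / n) ^ 2 * binB c n i = c * (1 - c) / n := by
  have hn' : (0:ℝ) < n := by exact_mod_cast hn
  have := bernstein.variance (n := n) (x := ⟨c, hc0, hc1⟩) hn.ne'
  rw [← this, ← Fin.sum_univ_eq_sum_range (fun i => (c - (i : ℝ) / n) ^ 2 * binB c n i)]
  apply Finset.sum_congr rfl
  intro k _
  simp [bernstein_apply, bernstein.z, binB]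

lemma binB_sum_le_one {c : ℝ} (hc0 : 0 ≤ c) (hc1 : c ≤ 1) (n m : ℕ) :
    ∑ i ∈ range m, binB c n i ≤ 1 := by
  have h1 : ∑ i ∈ range m, binB c n i ≤ ∑ i ∈ range (max m (n + 1)), binB c n i :=
    Finset.sum_le_sum_of_subset_of_nonneg (Finset.range_subset_range.2 (le_max_left _ _))
      (fun i _ _ => binB_nonneg hc0 hc1 n i)
  have h2 : ∑ i ∈ range (max m (n + 1)), binB c n i = ∑ i ∈ range (n + 1), binB c n i := by
    refine (Finset.sum_subset (Finset.range_subset_range.2 (le_max_right _ _)) ?_).symm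
    intro i _ hi
    rw [Finset.mem_range, not_lt] at hi
    unfold binB
    rw [Nat.choose_eq_zero_of_lt (by omega)]
    simp
  rw [h2, binB_sum_one] at h1
  exact h1

lemma div_trick {d S K : ℝ} (hd : 0 < d) {n : ℝ} (hn : 0 < n) (h : d * S ≤ K / n) :
    S ≤ K / (d * n) := by
  rw [le_div_iff₀ hn] at h
  rw [le_div_iff₀ (mul_pos hd hn)]
  nlinarith

lemma cheb_lo {c a : ℝ} (hc0 : 0 < c) (hc1 : c < 1) (ha : a < c) {n L : ℕ} (hn : 0 < n)
    (hL : (L : ℝ) ≤ a * n) :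
    ∑ i ∈ range (L + 1), binB c n i ≤ c * (1 - c) / ((c - a) ^ 2 * n) := by
  have hn' : (0:ℝ) < n := by exact_mod_cast hn
  have ha0 : 0 ≤ a := by nlinarith [Nat.cast_nonneg (α := ℝ) L]
  have hLn : L + 1 ≤ n + 1 := by
    have : (L : ℝ) < n := by nlinarith
    have : L < n := by exact_mod_cast this
    omega
  have key : (c - a) ^ 2 * ∑ i ∈ range (L + 1), binB c n i ≤ c * (1 - c) / n := by
    rw [Finset.mul_sum]
    calc ∑ i ∈ range (L + 1), (c - a) ^ 2 * binB c n i
        ≤ ∑ i ∈ range (L + 1), (c - (i : ℝ) / n) ^ 2 * binB c n i := by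
          apply Finset.sum_le_sum
          intro i hi
          apply mul_le_mul_of_nonneg_right _ (binB_nonneg hc0.le hc1.le n i)
          have hi' : (i : ℝ) ≤ a * n := by
            have : (i : ℝ) ≤ L := by exact_mod_cast Nat.lt_succ_iff.1 (Finset.mem_range.1 hi)
            linarith
          have hia : (i : ℝ) / n ≤ a := (div_le_iff₀ hn').2 hi'
          have h1 : c - a ≤ c - (i : ℝ) / n := by linarith
          exact pow_le_pow_left₀ (by linarith) h1 2
      _ ≤ ∑ i ∈ range (n + 1), (c - (i : ℝ) / n) ^ 2 * binB c n i :=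
          Finset.sum_le_sum_of_subset_of_nonneg (Finset.range_subset_range.2 hLn)
            (fun i _ _ => mul_nonneg (sq_nonneg _) (binB_nonneg hc0.le hc1.le n i))
      _ = c * (1 - c) / n := binB_variance hc0.le hc1.le hn
  have hd : (0:ℝ) < (c - a) ^ 2 := by
    have : 0 < c - a := by linarith
    positivity
  exact div_trick hd hn' key

lemma cheb_hi {c a : ℝ} (hc0 : 0 < c) (hc1 : c < 1) (ha : c < a) {n L : ℕ} (hn : 0 < n)
    (hL : a * n ≤ L) :
    1 - c * (1 - c) / ((a - c) ^ 2 * n) ≤ ∑ i ∈ range (L + 1), binB c n i := by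
  have hn' : (0:ℝ) < n := by exact_mod_cast hn
  have hB : 0 ≤ c * (1 - c) / ((a - c) ^ 2 * n) := by
    have h1 : (0:ℝ) < 1 - c := by linarith
    have h2 : (0:ℝ) < a - c := by linarith
    positivity
  by_cases hcase : n ≤ L
  · have h1 : ∑ i ∈ range (n + 1), binB c n i ≤ ∑ i ∈ range (L + 1), binB c n i :=
      Finset.sum_le_sum_of_subset_of_nonneg (Finset.range_subset_range.2 (by omega))
        (fun i _ _ => binB_nonneg hc0.le hc1.le n i)
    rw [binB_sum_one] at h1
    linarith
  · push_neg at hcase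
    have hsplit : ∑ i ∈ range (L + 1), binB c n i + ∑ i ∈ Ico (L + 1) (n + 1), binB c n i
        = ∑ i ∈ range (n + 1), binB c n i := by
      simp only [Finset.range_eq_Ico]
      exact Finset.sum_Ico_consecutive _ (by omega) (by omega)
    have key : (a - c) ^ 2 * ∑ i ∈ Ico (L + 1) (n + 1), binB c n i ≤ c * (1 - c) / n := by
      rw [Finset.mul_sum]
      calc ∑ i ∈ Ico (L + 1) (n + 1), (a - c) ^ 2 * binB c n i
          ≤ ∑ i ∈ Ico (L + 1) (n + 1), (c - (i : ℝ) / n) ^ 2 * binB c n i := by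
            apply Finset.sum_le_sum
            intro i hi
            apply mul_le_mul_of_nonneg_right _ (binB_nonneg hc0.le hc1.le n i)
            have hi1 : L + 1 ≤ i := (Finset.mem_Ico.1 hi).1
            have hi' : a * n ≤ (i : ℝ) := by
              have : (L : ℝ) + 1 ≤ i := by exact_mod_cast hi1
              linarith
            have hia : a ≤ (i : ℝ) / n := (le_div_iff₀ hn').2 hi'
            have h1 : a - c ≤ (i : ℝ) / n - c := by linarith
            calc (a - c) ^ 2 ≤ ((i : ℝ) / n - c) ^ 2 := pow_le_pow_left₀ (by linarith) h1 2
              _ = (c - (i : ℝ) / n) ^ 2 := by ring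
        _ ≤ ∑ i ∈ range (n + 1), (c - (i : ℝ) / n) ^ 2 * binB c n i := by
            apply Finset.sum_le_sum_of_subset_of_nonneg
            · rw [Finset.range_eq_Ico]
              exact Finset.Ico_subset_Ico (by omega) le_rfl
            · exact fun i _ _ => mul_nonneg (sq_nonneg _) (binB_nonneg hc0.le hc1.le n i)
        _ = c * (1 - c) / n := binB_variance hc0.le hc1.le hn
    have hd : (0:ℝ) < (a - c) ^ 2 := by
      have : 0 < a - c := by linarith
      positivity
    have h2 : ∑ i ∈ Ico (L + 1) (n + 1), binB c n i ≤ c * (1 - c) / ((a - c) ^ 2 * n) :=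
      div_trick hd hn' key
    have h3 := binB_sum_one c n
    linarith


lemma slln_bool {Ω : Type*} [MeasurableSpace Ω] (μ : Measure Ω) [IsProbabilityMeasure μ]
    (q : ℝ) (hq0 : 0 ≤ q)
    (I : ℕ → Ω → Bool) (hmeas : ∀ t, Measurable (I t))
    (hindep : ProbabilityTheory.iIndepFun I μ)
    (hq : ∀ t, μ {ω | I t ω = true} = ENNReal.ofReal q) :
    ∀ᵐ ω ∂μ, Tendsto
      (fun T : ℕ => ((((range T).filter (fun s => I s ω = true)).card : ℝ)) / T)
      atTop (𝓝 q) := by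
  classical
  set f : Bool → ℝ := fun b => if b = true then 1 else 0 with hf
  have fm : Measurable f := measurable_from_top
  have hsetmeas : ∀ u : ℕ, MeasurableSet {ω | I u ω = true} := by
    intro u
    have : {ω | I u ω = true} = I u ⁻¹' {true} := by ext ω; simp
    rw [this]
    exact (hmeas u) (measurableSet_singleton true)
  have hmap : ∀ t, μ.map (I t) = μ.map (I 0) := by
    intro t
    apply MeasureTheory.Measure.ext
    intro s hs
    rw [Measure.map_apply (hmeas t) hs, Measure.map_apply (hmeas 0) hs]
    by_cases h1 : true ∈ s <;> by_cases h2 : false ∈ s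
    · have hs' : s = Set.univ := by ext b; cases b <;> simp [h1, h2]
      subst hs'; rw [Set.preimage_univ, Set.preimage_univ]
    · have hs' : s = {true} := by ext b; cases b <;> simp [h1, h2]
      subst hs'
      have e : ∀ u : ℕ, I u ⁻¹' {true} = {ω | I u ω = true} := by
        intro u; ext ω; simp
      rw [e t, e 0, hq t, hq 0]
    · have hs' : s = {false} := by ext b; cases b <;> simp [h1, h2]
      subst hs'
      have e : ∀ u : ℕ, I u ⁻¹' {false} = {ω | I u ω = true}ᶜ := by
        intro u; ext ω; simp
      rw [e t, e 0, measure_compl (hsetmeas t) (measure_ne_top _ _),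
        measure_compl (hsetmeas 0) (measure_ne_top _ _), hq t, hq 0]
    · have hs' : s = ∅ := by ext b; cases b <;> simp [h1, h2]
      subst hs'; simp
  have hident : ∀ i, ProbabilityTheory.IdentDistrib (f ∘ I i) (f ∘ I 0) μ μ := by
    intro i
    exact ProbabilityTheory.IdentDistrib.comp
      ⟨(hmeas i).aemeasurable, (hmeas 0).aemeasurable, hmap i⟩ fm
  have hindep' : Pairwise (Function.onFun (ProbabilityTheory.IndepFun · · μ) fun t => f ∘ I t) :=
    fun i j hij => (hindep.indepFun hij).comp fm fm
  have hXeq : f ∘ I 0 = Set.indicator {ω | I 0 ω = true} (fun _ => (1:ℝ)) := by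
    ext ω
    by_cases h : I 0 ω = true <;> simp [hf, h, Set.indicator]
  have hint : Integrable (f ∘ I 0) μ := by
    rw [hXeq]
    exact (integrable_const (1:ℝ)).indicator (hsetmeas 0)
  have hmean : ∫ ω, (f ∘ I 0) ω ∂μ = q := by
    rw [hXeq]
    have : Set.indicator {ω | I 0 ω = true} (fun _ : Ω => (1:ℝ))
        = Set.indicator {ω | I 0 ω = true} (1 : Ω → ℝ) := rfl
    rw [this, MeasureTheory.integral_indicator_one (hsetmeas 0), measureReal_def, hq 0,
      ENNReal.toReal_ofReal hq0]
  have := ProbabilityTheory.strong_law_ae_real (fun t => f ∘ I t) hint hindep' hident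
  rw [hmean] at this
  filter_upwards [this] with ω hω
  convert hω using 2 with T
  rw [← Finset.sum_boole]
  rfl
/-- Almost-sure limit of the binomial-mixture wealth
`W̄_T = (1 − Bin(L_T; T+1, c))/c` for i.i.d. Bernoulli(q) loss indicators:
it tends to `1/c` if `q < c` and to `0` if `q > c`. -/
theorem stmt11 {Ω : Type*} [MeasurableSpace Ω] (μ : Measure Ω) [IsProbabilityMeasure μ]
    (q c : ℝ) (hq0 : 0 ≤ q) (hq1 : q ≤ 1) (hc0 : 0 < c) (hc1 : c < 1)
    (I : ℕ → Ω → Bool) (hmeas : ∀ t, Measurable (I t))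
    (hindep : ProbabilityTheory.iIndepFun I μ)
    (hq : ∀ t, μ {ω | I t ω = true} = ENNReal.ofReal q)
    (L : ℕ → Ω → ℕ)
    (hL : ∀ T ω, L T ω = ((Finset.range T).filter (fun s => I s ω = true)).card)
    (Wbar : ℕ → Ω → ℝ)
    (hW : ∀ T ω, Wbar T ω =
      (1 - ∑ i ∈ Finset.range (L T ω + 1),
          (Nat.choose (T + 1) i : ℝ) * c ^ i * (1 - c) ^ (T + 1 - i)) / c) :
    (q < c → ∀ᵐ ω ∂μ,
        Filter.Tendsto (fun T => Wbar T ω) Filter.atTop (nhds (1 / c)))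
      ∧ (c < q → ∀ᵐ ω ∂μ,
        Filter.Tendsto (fun T => Wbar T ω) Filter.atTop (nhds 0)) := by
  have slln := slln_bool μ q hq0 I hmeas hindep hq
  have hWsum : ∀ T ω, Wbar T ω = (1 - ∑ i ∈ range (L T ω + 1), binB c (T + 1) i) / c := by
    intro T ω; rw [hW]; rfl
  constructor
  · -- q < c
    intro hqc
    set a : ℝ := (q + c) / 2 with ha
    have haq : q < a := by rw [ha]; linarith
    have hac : a < c := by rw [ha]; linarith
    have ha0 : 0 ≤ a := by rw [ha]; linarith
    filter_upwards [slln] with ω hω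
    have hω' : Filter.Tendsto (fun T : ℕ => ((L T ω : ℝ)) / T) Filter.atTop (𝓝 q) := by
      refine hω.congr fun T => ?_
      rw [hL]
    have hup : ∀ᶠ T : ℕ in Filter.atTop,
        ∑ i ∈ range (L T ω + 1), binB c (T + 1) i
          ≤ c * (1 - c) / ((c - a) ^ 2 * ((T : ℝ) + 1)) := by
      filter_upwards [hω'.eventually_lt_const haq, Filter.eventually_ge_atTop 1]
        with T hT hT1
      have hT0 : (0:ℝ) < T := by exact_mod_cast hT1
      have hLa : (L T ω : ℝ) ≤ a * (T + 1) := by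
        have h1 : (L T ω : ℝ) < a * T := by
          rw [div_lt_iff₀ hT0] at hT; linarith
        nlinarith
      have := cheb_lo hc0 hc1 hac (n := T + 1) (L := L T ω) (by omega)
        (by push_cast; exact hLa)
      convert this using 3 <;> push_cast <;> ring
    have hupper : Filter.Tendsto
        (fun T : ℕ => c * (1 - c) / ((c - a) ^ 2 * ((T : ℝ) + 1)))
        Filter.atTop (𝓝 0) := by
      have h1 : Filter.Tendsto
          (fun T : ℕ => (c * (1 - c) / (c - a) ^ 2) * (1 / ((T : ℝ) + 1)))
          Filter.atTop (𝓝 ((c * (1 - c) / (c - a) ^ 2) * 0)) :=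
        tendsto_one_div_add_atTop_nhds_zero_nat.const_mul _
      rw [mul_zero] at h1
      refine h1.congr fun T => ?_
      rw [mul_one_div, div_div]
    have hSlim : Filter.Tendsto
        (fun T : ℕ => ∑ i ∈ range (L T ω + 1), binB c (T + 1) i)
        Filter.atTop (𝓝 0) :=
      tendsto_of_tendsto_of_tendsto_of_le_of_le' tendsto_const_nhds hupper
        (Filter.Eventually.of_forall fun T =>
          Finset.sum_nonneg fun i _ => binB_nonneg hc0.le hc1.le _ i) hup
    have e : (fun T => Wbar T ω)
        = fun T => (1 - ∑ i ∈ range (L T ω + 1), binB c (T + 1) i) / c :=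
      funext fun T => hWsum T ω
    rw [e]
    have := ((tendsto_const_nhds (x := (1:ℝ)) (f := Filter.atTop (α := ℕ))).sub hSlim).div_const c
    simpa using this
  · -- c < q
    intro hcq
    set b : ℝ := (c + q) / 2 with hb
    set a : ℝ := (c + b) / 2 with ha
    have hcb : c < b := by rw [hb]; linarith
    have hbq : b < q := by rw [hb]; linarith
    have hca : c < a := by rw [ha]; linarith
    have hab : a < b := by rw [ha]; linarith
    have ha0 : 0 < a := by linarith
    filter_upwards [slln] with ω hω
    have hω' : Filter.Tendsto (fun T : ℕ => ((L T ω : ℝ)) / T) Filter.atTop (𝓝 q) := by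
      refine hω.congr fun T => ?_
      rw [hL]
    have hlo : ∀ᶠ T : ℕ in Filter.atTop,
        1 - c * (1 - c) / ((a - c) ^ 2 * ((T : ℝ) + 1))
          ≤ ∑ i ∈ range (L T ω + 1), binB c (T + 1) i := by
      filter_upwards [hω'.eventually_const_lt hbq,
        Filter.eventually_ge_atTop (max 1 ⌈a / (b - a)⌉₊)] with T hT hT1
      have hT1' : (1:ℕ) ≤ T := le_trans (le_max_left _ _) hT1
      have hT0 : (0:ℝ) < T := by exact_mod_cast hT1'
      have hceil : a / (b - a) ≤ (T : ℝ) := by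
        refine le_trans (Nat.le_ceil _) ?_
        exact_mod_cast le_trans (le_max_right _ _) hT1
      have hba : (0:ℝ) < b - a := by linarith
      have hge : a * ((T : ℝ) + 1) ≤ (L T ω : ℝ) := by
        have h1 : b * T < (L T ω : ℝ) := by
          rw [lt_div_iff₀ hT0] at hT; linarith
        have h2 : a ≤ (b - a) * T := by
          rw [div_le_iff₀ hba] at hceil; linarith
        nlinarith
      have := cheb_hi hc0 hc1 hca (n := T + 1) (L := L T ω) (by omega)
        (by push_cast; exact hge)
      convert this using 4 <;> push_cast <;> ring
    have hlolim : Filter.Tendsto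
        (fun T : ℕ => 1 - c * (1 - c) / ((a - c) ^ 2 * ((T : ℝ) + 1)))
        Filter.atTop (𝓝 1) := by
      have h1 : Filter.Tendsto
          (fun T : ℕ => (c * (1 - c) / (a - c) ^ 2) * (1 / ((T : ℝ) + 1)))
          Filter.atTop (𝓝 ((c * (1 - c) / (a - c) ^ 2) * 0)) :=
        tendsto_one_div_add_atTop_nhds_zero_nat.const_mul _
      rw [mul_zero] at h1
      have h2 := tendsto_const_nhds (x := (1:ℝ)) (f := Filter.atTop (α := ℕ)) |>.sub h1
      rw [sub_zero] at h2
      refine h2.congr fun T => ?_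
      rw [mul_one_div, div_div]
    have hSlim : Filter.Tendsto
        (fun T : ℕ => ∑ i ∈ range (L T ω + 1), binB c (T + 1) i)
        Filter.atTop (𝓝 1) :=
      tendsto_of_tendsto_of_tendsto_of_le_of_le' hlolim tendsto_const_nhds hlo
        (Filter.Eventually.of_forall fun T => binB_sum_le_one hc0.le hc1.le _ _)
    have e : (fun T => Wbar T ω)
        = fun T => (1 - ∑ i ∈ range (L T ω + 1), binB c (T + 1) i) / c :=
      funext fun T => hWsum T ω
    rw [e]
    have := ((tendsto_const_nhds (x := (1:ℝ)) (f := Filter.atTop (α := ℕ))).sub hSlim).div_const c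
    simpa using this
end

section
/- With E_t defined by the backward recursion E_{t−1}(ℓ) = ((ℓ+1)/(t+1))·E_t(ℓ+1) + ((t−ℓ)/(t+1))·E_t(ℓ) from a terminal function E_T with ∑_ℓ E_T(ℓ) = T+1, and bets B_{t|ℓ}(0) = E_t(ℓ)/E_{t−1}(ℓ), B_{t|ℓ}(1) = E_t(ℓ+1)/E_{t−1}(ℓ) (with convention 0/0 = 0), each bet satisfies the fairness constraint B_{t|ℓ}(0)·(t−ℓ)/(t+1) + B_{t|ℓ}(1)·(ℓ+1)/(t+1) = 1 whenever E_{t−1}(ℓ) > 0, and for any binary sequence i_1,...,i_T with running loss counts L_t, the product ∏_{t=1}^T B_{t|L_{t−1}}(i_t) = E_T(L_T) whenever all intermediate E values are positive. -/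
open Finset

/-- Given a terminal betting function `E_T` with `∑_ℓ E_T(ℓ) = T+1` and the
backward recursion, the bets `B_{t|ℓ}(0) = E_{t+1}(ℓ)/E_t(ℓ)`,
`B_{t|ℓ}(1) = E_{t+1}(ℓ+1)/E_t(ℓ)` (convention `0/0 = 0`) satisfy the fairness
constraint wherever `E_t(ℓ) > 0`, and along any binary path with positive
intermediate `E` values the product of the bets recovers `E_T(L_T)`. -/
theorem stmt14 (T : ℕ) (E : ℕ → ℕ → ℝ)
    (hnonneg : ∀ ℓ ≤ T, 0 ≤ E T ℓ)
    (hsum : ∑ ℓ ∈ Finset.range (T + 1), E T ℓ = (T : ℝ) + 1)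
    (hrec : ∀ t < T, ∀ ℓ ≤ t,
      E t ℓ = (((ℓ : ℝ) + 1) / ((t : ℝ) + 2)) * E (t + 1) (ℓ + 1)
        + (((t : ℝ) + 1 - ℓ) / ((t : ℝ) + 2)) * E (t + 1) ℓ)
    (B : ℕ → ℕ → Bool → ℝ)
    (hB : ∀ t ℓ (b : Bool),
      B t ℓ b = (if b then E (t + 1) (ℓ + 1) else E (t + 1) ℓ) / E t ℓ) :
    (∀ t < T, ∀ ℓ ≤ t, 0 < E t ℓ →
        B t ℓ false * (((t : ℝ) + 1 - ℓ) / ((t : ℝ) + 2))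
          + B t ℓ true * (((ℓ : ℝ) + 1) / ((t : ℝ) + 2)) = 1)
      ∧ ∀ (i : ℕ → Bool) (L : ℕ → ℕ)
          (hL : ∀ t, L t = ((Finset.range t).filter (fun s => i s = true)).card),
          (∀ t ≤ T, 0 < E t (L t)) →
          ∏ t ∈ Finset.range T, B t (L t) (i t) = E T (L T) := by
  -- the partial sums are all equal to t+1
  have hsum' : ∀ d t, t + d = T → ∑ ℓ ∈ Finset.range (t + 1), E t ℓ = (t : ℝ) + 1 := by
    intro d
    induction d with
    | zero =>
      intro t ht
      have : t = T := by omega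
      subst this; exact hsum
    | succ d ih =>
      intro t htd
      have ht : t < T := by omega
      have h1 := ih (t + 1) (by omega)
      have key : ∑ ℓ ∈ Finset.range (t + 1), E t ℓ
          = ∑ m ∈ Finset.range (t + 2), (((m : ℝ)) / ((t : ℝ) + 2)) * E (t + 1) m
            + ∑ m ∈ Finset.range (t + 2), (((t : ℝ) + 1 - m) / ((t : ℝ) + 2)) * E (t + 1) m := by
        rw [Finset.sum_range_succ' (fun m => (((m : ℝ)) / ((t : ℝ) + 2)) * E (t + 1) m) (t + 1),
            Finset.sum_range_succ (fun m => (((t : ℝ) + 1 - m) / ((t : ℝ) + 2)) * E (t + 1) m) (t + 1)]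
        push_cast
        rw [show ((t : ℝ) + 1 - (t + 1)) / ((t : ℝ) + 2) * E (t + 1) (t + 1) = 0 by ring,
            show ((0 : ℝ)) / ((t : ℝ) + 2) * E (t + 1) 0 = 0 by ring, add_zero, add_zero,
            ← Finset.sum_add_distrib]
        refine Finset.sum_congr rfl fun ℓ hℓ => ?_
        have hℓt : ℓ ≤ t := by have := Finset.mem_range.mp hℓ; omega
        rw [hrec t ht ℓ hℓt]
      rw [key, ← Finset.sum_add_distrib]
      have : ∀ m ∈ Finset.range (t + 2),
          ((m : ℝ)) / ((t : ℝ) + 2) * E (t + 1) m + (((t : ℝ) + 1 - m) / ((t : ℝ) + 2)) * E (t + 1) m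
          = (((t : ℝ) + 1) / ((t : ℝ) + 2)) * E (t + 1) m := by
        intro m _; ring
      rw [Finset.sum_congr rfl this, ← Finset.mul_sum]
      rw [show t + 2 = (t + 1) + 1 from rfl] at h1 ⊢
      rw [h1]
      have ht2 : ((t : ℝ) + 2) ≠ 0 := by positivity
      push_cast
      rw [div_mul_eq_mul_div, div_eq_iff ht2]
      ring
  have hE00 : E 0 0 = 1 := by
    have := hsum' T 0 (by omega)
    simpa using this
  constructor
  · intro t ht ℓ hℓ hpos
    rw [hB, hB]
    have h := hrec t ht ℓ hℓ
    have hne : E t ℓ ≠ 0 := ne_of_gt hpos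
    have ht2 : ((t : ℝ) + 2) ≠ 0 := by positivity
    simp only [if_true, if_false, Bool.false_eq_true, ite_true, ite_false]
    rw [div_mul_div_comm, div_mul_div_comm, ← add_div,
        div_eq_one_iff_eq (mul_ne_zero hne ht2), h]
    field_simp
    ring
  · intro i L hL hpos
    have hLstep : ∀ n, L (n + 1) = L n + (if i n then 1 else 0) := by
      intro n
      rw [hL, hL, Finset.range_add_one, Finset.filter_insert]
      by_cases h : i n = true
      · rw [if_pos h, Finset.card_insert_of_notMem (by simp)]
        simp [h]
      · rw [if_neg h]
        simp [h]
    have main : ∀ n ≤ T, ∏ t ∈ Finset.range n, B t (L t) (i t) = E n (L n) := by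
      intro n hn
      induction n with
      | zero =>
        have : L 0 = 0 := by rw [hL]; simp
        simp [this, hE00]
      | succ n ih =>
        rw [Finset.prod_range_succ, ih (by omega), hB]
        have hne : E n (L n) ≠ 0 := ne_of_gt (hpos n (by omega))
        rw [mul_div_assoc'] at *
        rw [mul_comm, mul_div_assoc, div_self hne, mul_one]
        cases hb : i n <;> simp [hLstep n, hb]
    exact main T le_rfl
end

section
/- Let Y_0, Y_1, Y_2, ... be exchangeable random variables with almost surely no ties, and for h ≥ 1 define γ(h) = inf{t ≥ 1 : ∑_{s=1}^t 1{Y_s ≥ Y_0} ≥ h}. Then for every integer N ≥ 0, P(γ(h) > h + N − 1) = h/(h+N); equivalently, Q = h/γ(h) is an exact p-value: P(Q ≤ h/(h+N)) = h/(h+N). -/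
open MeasureTheory Finset
open scoped ENNReal

-- combinatorial lemma: for injective x on Fin n, exactly h indices have fewer
-- than h others weakly above them (h ≤ n)
lemma aux_rank17 {n h : ℕ} (hhn : h ≤ n) (x : Fin n → ℝ) (hx : Function.Injective x) :
    (univ.filter (fun i : Fin n =>
      (univ.filter (fun j : Fin n => j ≠ i ∧ x i ≤ x j)).card < h)).card = h := by
  classical
  set r : Fin n → ℕ := fun i => (univ.filter (fun j : Fin n => x i < x j)).card with hr
  have hfe : ∀ i : Fin n, univ.filter (fun j : Fin n => j ≠ i ∧ x i ≤ x j)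
      = univ.filter (fun j : Fin n => x i < x j) := by
    intro i
    ext j
    simp only [mem_filter, mem_univ, true_and]
    constructor
    · rintro ⟨hne, hle⟩
      exact lt_of_le_of_ne hle (fun he => hne (hx he.symm))
    · intro hlt
      exact ⟨fun he => absurd (he ▸ hlt) (lt_irrefl _), le_of_lt hlt⟩
  have hmono : ∀ a b : Fin n, x a < x b → r b < r a := by
    intro a b hab
    apply Finset.card_lt_card
    constructor
    · intro j hj
      simp only [mem_filter, mem_univ, true_and] at hj ⊢
      exact hab.trans hj
    · intro hsub
      have := hsub (by simp [hab] : b ∈ univ.filter (fun j => x a < x j))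
      simp at this
  have hinj : Function.Injective r := by
    intro a b hab
    by_contra hne
    rcases lt_or_gt_of_ne (fun he => hne (hx he)) with hlt | hlt
    · have := hmono a b hlt; omega
    · have := hmono b a hlt; omega
  have hlt_n : ∀ i : Fin n, r i < n := by
    intro i
    have hss : univ.filter (fun j : Fin n => x i < x j) ⊂ univ := by
      rw [Finset.ssubset_univ_iff]
      intro he
      have : i ∈ univ.filter (fun j : Fin n => x i < x j) := by
        rw [he]; exact mem_univ i
      simp at this
    simpa using Finset.card_lt_card hss
  have himg : univ.image r = range n := by
    apply Finset.eq_of_subset_of_card_le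
    · intro m hm
      simp only [mem_image] at hm
      obtain ⟨i, -, rfl⟩ := hm
      exact mem_range.2 (hlt_n i)
    · rw [Finset.card_image_of_injective _ hinj]
      simp
  calc (univ.filter (fun i : Fin n =>
      (univ.filter (fun j : Fin n => j ≠ i ∧ x i ≤ x j)).card < h)).card
      = (univ.filter (fun i : Fin n => r i < h)).card := by
        congr 1
        ext i
        simp only [mem_filter, mem_univ, true_and]
        rw [hfe i]
    _ = ((univ.image r).filter (fun m => m < h)).card := by
        rw [Finset.filter_image, Finset.card_image_of_injective _ hinj]
    _ = h := by
        rw [himg]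
        have : (range n).filter (fun m => m < h) = range h := by
          ext m; simp only [mem_filter, mem_range]; omega
        rw [this, card_range]


/-- Negative binomial permutation test: for exchangeable `Y_0, Y_1, …` with
almost surely no ties, the time `γ(h)` of the `h`-th loss satisfies
`P(γ(h) > h+N−1) = h/(h+N)` for every `N ≥ 0`; equivalently `Q = h/γ(h)` is an
exact p-value. The event `{γ(h) > h+N−1}` is expressed as: fewer than `h` of
`Y_1, …, Y_{h+N−1}` are `≥ Y_0`. -/
theorem stmt17 {Ω : Type*} [MeasurableSpace Ω] (μ : Measure Ω) [IsProbabilityMeasure μ]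
    (Y : ℕ → Ω → ℝ) (hmeas : ∀ t, Measurable (Y t))
    (hexch : ∀ (n : ℕ) (σ : Equiv.Perm (Fin n)),
      μ.map (fun ω => fun k : Fin n => Y (σ k) ω)
        = μ.map (fun ω => fun k : Fin n => Y k ω))
    (hties : ∀ᵐ ω ∂μ, ∀ i j : ℕ, i ≠ j → Y i ω ≠ Y j ω)
    (h : ℕ) (hh : 1 ≤ h) (N : ℕ) :
    μ {ω | (((Finset.Icc 1 (h + N - 1)).filter
        (fun s => Y 0 ω ≤ Y s ω)).card) < h}
      = ENNReal.ofReal ((h : ℝ) / ((h : ℝ) + N)) := by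
  classical
  set n := h + N with hn
  have hn1 : 1 ≤ n := le_trans hh (Nat.le_add_right _ _)
  set i0 : Fin n := ⟨0, by omega⟩ with hi0
  set vec : Ω → Fin n → ℝ := fun ω k => Y k ω with hvecdef
  have hvec : Measurable vec := measurable_pi_lambda _ fun k => hmeas k
  -- the count function
  set c : Fin n → (Fin n → ℝ) → ℕ :=
    fun i x => (univ.filter (fun j : Fin n => j ≠ i ∧ x i ≤ x j)).card with hc
  have hcm : ∀ i : Fin n, Measurable (c i) := by
    intro i
    have he : c i = fun x => ∑ j : Fin n, if j ≠ i ∧ x i ≤ x j then 1 else 0 := by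
      funext x
      show (univ.filter (fun j : Fin n => j ≠ i ∧ x i ≤ x j)).card = _
      rw [Finset.card_filter]
    rw [he]
    apply Finset.measurable_sum
    intro j _
    by_cases hji : j = i
    · simp [hji]
    · have : (fun x : Fin n → ℝ => if j ≠ i ∧ x i ≤ x j then (1:ℕ) else 0)
          = fun x => if x i ≤ x j then (1:ℕ) else 0 := by
        funext x; simp [hji]
      rw [this]
      exact Measurable.ite (measurableSet_le (measurable_pi_apply i) (measurable_pi_apply j))
        measurable_const measurable_const
  set D : Fin n → Set (Fin n → ℝ) := fun i => {x | c i x < h} with hD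
  have hDmeas : ∀ i : Fin n, MeasurableSet (D i) := by
    intro i
    exact (hcm i) (MeasurableSet.of_discrete (s := {m : ℕ | m < h}))
  have hSmeas : ∀ i : Fin n, MeasurableSet (vec ⁻¹' D i) := fun i => hvec (hDmeas i)
  -- the event in the statement is `vec ⁻¹' D i0`
  have hset : {ω | (((Finset.Icc 1 (h + N - 1)).filter
      (fun s => Y 0 ω ≤ Y s ω)).card) < h} = vec ⁻¹' D i0 := by
    ext ω
    simp only [Set.mem_setOf_eq, Set.mem_preimage, hD]
    have hcard : ((Finset.Icc 1 (h + N - 1)).filter (fun s => Y 0 ω ≤ Y s ω))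
        = (univ.filter (fun j : Fin n => j ≠ i0 ∧ Y 0 ω ≤ Y (j:ℕ) ω)).image Fin.val := by
      ext s
      simp only [mem_filter, mem_Icc, mem_image, mem_univ, true_and]
      constructor
      · rintro ⟨⟨h1, h2⟩, hle⟩
        refine ⟨⟨s, by omega⟩, ⟨?_, hle⟩, rfl⟩
        intro heq
        have : s = 0 := by simpa [hi0, Fin.ext_iff] using heq
        omega
      · rintro ⟨j, ⟨hne, hle⟩, rfl⟩
        have hj1 : 1 ≤ (j:ℕ) := by
          rcases Nat.eq_zero_or_pos (j:ℕ) with h0 | h0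
          · exact absurd (Fin.ext (by simp [hi0, h0])) hne
          · exact h0
        have hj2 : (j:ℕ) < n := j.2
        exact ⟨⟨hj1, by omega⟩, hle⟩
    rw [hcard, Finset.card_image_of_injective _ Fin.val_injective]
  -- exchangeability: all indices give the same probability
  have key : ∀ i : Fin n, μ (vec ⁻¹' D i) = μ (vec ⁻¹' D i0) := by
    intro i
    set σ : Equiv.Perm (Fin n) := Equiv.swap i0 i with hσ
    have h1 := hexch n σ
    have hm1 : Measurable (fun ω => fun k : Fin n => Y (σ k) ω) :=
      measurable_pi_lambda _ fun k => hmeas _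
    have e1 : μ.map (fun ω => fun k : Fin n => Y (σ k) ω) (D i0) = μ (vec ⁻¹' D i) := by
      rw [Measure.map_apply hm1 (hDmeas i0)]
      congr 1
      ext ω
      simp only [Set.mem_preimage, Set.mem_setOf_eq, hD]
      have hcc : c i0 (fun k => Y (σ k) ω) = c i (vec ω) := by
        rw [hc]
        apply Finset.card_equiv σ
        intro j
        simp only [mem_filter, mem_univ, true_and]
        have hσ0 : σ i0 = i := Equiv.swap_apply_left i0 i
        constructor
        · rintro ⟨hne, hle⟩
          refine ⟨fun heq => hne (σ.injective (by rw [heq, hσ0])), ?_⟩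
          rw [← hσ0]
          exact hle
        · rintro ⟨hne, hle⟩
          refine ⟨fun heq => hne (by rw [heq, hσ0]), ?_⟩
          rw [hσ0]
          exact hle
      rw [hcc]
    have e2 : μ.map vec (D i0) = μ (vec ⁻¹' D i0) := Measure.map_apply hvec (hDmeas i0)
    rw [← e1, h1, e2]
  -- sum over indices
  have hhn : h ≤ n := Nat.le_add_right _ _
  have hsum : (n : ℝ≥0∞) * μ (vec ⁻¹' D i0) = (h : ℝ≥0∞) := by
    have e3 : ∑ i : Fin n, μ (vec ⁻¹' D i) = (n : ℝ≥0∞) * μ (vec ⁻¹' D i0) := by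
      rw [Finset.sum_congr rfl (fun i _ => key i), Finset.sum_const, card_univ,
        Fintype.card_fin, nsmul_eq_mul]
    rw [← e3]
    have e4 : ∀ i : Fin n, μ (vec ⁻¹' D i)
        = ∫⁻ ω, (vec ⁻¹' D i).indicator (fun _ => (1:ℝ≥0∞)) ω ∂μ := by
      intro i
      rw [lintegral_indicator_const (hSmeas i), one_mul]
    rw [Finset.sum_congr rfl fun i _ => e4 i, ← lintegral_finset_sum]
    · have hae : ∀ᵐ ω ∂μ, ∑ i : Fin n,
          (vec ⁻¹' D i).indicator (fun _ => (1:ℝ≥0∞)) ω = (h:ℝ≥0∞) := by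
        filter_upwards [hties] with ω hω
        have hxinj : Function.Injective (vec ω) := by
          intro a b hab
          by_contra hne
          exact hω a b (fun hv => hne (Fin.ext hv)) hab
        have e5 : ∀ i : Fin n, (vec ⁻¹' D i).indicator (fun _ => (1:ℝ≥0∞)) ω
            = if c i (vec ω) < h then 1 else 0 := by
          intro i
          by_cases hi : c i (vec ω) < h
          · rw [Set.indicator_of_mem (by exact hi), if_pos hi]
          · rw [Set.indicator_of_notMem (by exact hi), if_neg hi]
        rw [Finset.sum_congr rfl fun i _ => e5 i, Finset.sum_boole]
        have hrk := aux_rank17 hhn (vec ω) hxinj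
        simp only [hc]
        exact_mod_cast hrk
      rw [lintegral_congr_ae hae, lintegral_const, measure_univ, mul_one]
    · intro i _
      exact measurable_const.indicator (hSmeas i)
  -- conclude
  rw [hset]
  have hne0 : (n : ℝ≥0∞) ≠ 0 := by
    simp only [ne_eq, Nat.cast_eq_zero]; omega
  have hnetop : (n : ℝ≥0∞) ≠ ⊤ := ENNReal.natCast_ne_top n
  have hdiv : μ (vec ⁻¹' D i0) = (h : ℝ≥0∞) / (n : ℝ≥0∞) :=
    (ENNReal.eq_div_iff hne0 hnetop).2 hsum
  rw [hdiv]
  have hpos : (0:ℝ) < (h:ℝ) + N := by positivity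
  rw [ENNReal.ofReal_div_of_pos hpos]
  congr 1
  · rw [ENNReal.ofReal_natCast]
  · rw [hn]
    push_cast
    rw [ENNReal.ofReal_add (by positivity) (by positivity)]
    simp [ENNReal.ofReal_natCast]
end
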